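/- arXiv:2304.12068 — 5 statements merged into one kernel-verified Lean document; each statement's English description precedes it below -/
import Mathlib

section
/- For all integers A > B ≥ 1, the ideal of R generated by x − y^A and x − y^B equals the ideal of R generated by x and y^B, and consequently the quotient ring R/(x − y^A, x − y^B) has dimension B as a κ-vector space. -/
open MvPolynomial

/-- The ideal `(x, y)` of the polynomial ring `κ[x,y]`. -/
noncomputable abbrev xyIdeal (κ : Type) [Field κ] : Ideal (MvPolynomial (Fin 2) κ) :=
  Ideal.span {X 0, X 1}

theorem xyIdeal_eq_ker (κ : Type) [Field κ] :
    xyIdeal κ = RingHom.ker (constantCoeff : MvPolynomial (Fin 2) κ →+* κ) := by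
  have hset : ({X 0, X 1} : Set (MvPolynomial (Fin 2) κ)) = X '' Set.univ := by
    ext y
    simp only [Set.image_univ, Set.mem_insert_iff, Set.mem_singleton_iff, Set.mem_range]
    constructor
    · rintro (rfl | rfl)
      exacts [⟨0, rfl⟩, ⟨1, rfl⟩]
    · rintro ⟨i, rfl⟩
      fin_cases i
      · exact Or.inl rfl
      · exact Or.inr rfl
  ext x
  rw [xyIdeal, hset, MvPolynomial.mem_ideal_span_X_image, RingHom.mem_ker]
  rw [show (constantCoeff : MvPolynomial (Fin 2) κ →+* κ) x = coeff 0 x from rfl]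
  constructor
  · intro h
    by_contra hc
    obtain ⟨i, -, hi⟩ := h 0 (MvPolynomial.mem_support_iff.mpr hc)
    exact hi rfl
  · intro h m hm
    by_contra hc
    push_neg at hc
    have : m = 0 := by
      ext i
      simpa using hc i (Set.mem_univ i)
    rw [this] at hm
    exact (MvPolynomial.mem_support_iff.mp hm) h

/-- The ideal `(x, y)` is prime (indeed maximal), being the kernel of the evaluation
at the origin. -/
instance xyIdeal_isPrime (κ : Type) [Field κ] : (xyIdeal κ).IsPrime := by
  rw [xyIdeal_eq_ker]
  exact RingHom.ker_isPrime _

/-- `R`, the localization of `κ[x,y]` at the maximal ideal `(x, y)`. -/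
noncomputable abbrev Rloc (κ : Type) [Field κ] : Type :=
  Localization.AtPrime (xyIdeal κ)

/-- The image of `x` in `R`. -/
noncomputable def xR (κ : Type) [Field κ] : Rloc κ :=
  algebraMap (MvPolynomial (Fin 2) κ) (Rloc κ) (X 0)

/-- The image of `y` in `R`. -/
noncomputable def yR (κ : Type) [Field κ] : Rloc κ :=
  algebraMap (MvPolynomial (Fin 2) κ) (Rloc κ) (X 1)

section Aux

variable (κ : Type) [Field κ] (B : ℕ)

/-- The ideal `(x, y^B)` in `κ[x,y]`. -/
noncomputable abbrev IIdeal : Ideal (MvPolynomial (Fin 2) κ) :=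
  Ideal.span {X 0, X 1 ^ B}

lemma mem_xyIdeal_iff (p : MvPolynomial (Fin 2) κ) :
    p ∈ xyIdeal κ ↔ constantCoeff p = 0 := by
  rw [xyIdeal_eq_ker]; rfl

lemma isUnit_mk_of_constantCoeff_ne_zero (u : MvPolynomial (Fin 2) κ)
    (hu : constantCoeff u ≠ 0) : IsUnit (Ideal.Quotient.mk (IIdeal κ B) u) := by
  set c := constantCoeff u with hc
  have hmem : u - C c ∈ xyIdeal κ := by
    rw [mem_xyIdeal_iff]; simp [hc]
  have hX0 : Ideal.Quotient.mk (IIdeal κ B) (X 0) = 0 := by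
    rw [Ideal.Quotient.eq_zero_iff_mem]; exact Ideal.subset_span (by simp)
  have hX1 : (Ideal.Quotient.mk (IIdeal κ B) (X 1)) ^ B = 0 := by
    rw [← map_pow, Ideal.Quotient.eq_zero_iff_mem]; exact Ideal.subset_span (by simp)
  have hmap : Ideal.Quotient.mk (IIdeal κ B) (u - C c) ∈
      Ideal.span {Ideal.Quotient.mk (IIdeal κ B) (X 0), Ideal.Quotient.mk (IIdeal κ B) (X 1)} := by
    have h1 : Ideal.Quotient.mk (IIdeal κ B) (u - C c) ∈
        Ideal.map (Ideal.Quotient.mk (IIdeal κ B)) (xyIdeal κ) :=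
      Ideal.mem_map_of_mem _ hmem
    rwa [xyIdeal, Ideal.map_span, Set.image_pair] at h1
  obtain ⟨a, b, hab⟩ := Ideal.mem_span_pair.mp hmap
  have hnil : IsNilpotent (Ideal.Quotient.mk (IIdeal κ B) (u - C c)) := by
    refine ⟨B, ?_⟩
    rw [← hab, hX0, mul_zero, zero_add, mul_pow, hX1, mul_zero]
  have hunit : IsUnit (Ideal.Quotient.mk (IIdeal κ B) (C c)) :=
    ((Ne.isUnit hu).map (MvPolynomial.C : κ →+* MvPolynomial (Fin 2) κ)).map
      (Ideal.Quotient.mk (IIdeal κ B))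
  have := hnil.isUnit_add_left_of_commute hunit (Commute.all _ _)
  have heq : Ideal.Quotient.mk (IIdeal κ B) (C c) + Ideal.Quotient.mk (IIdeal κ B) (u - C c)
      = Ideal.Quotient.mk (IIdeal κ B) u := by
    rw [map_sub]; ring
  rwa [heq] at this

lemma span_xyB_eq (A : ℕ) (hAB : B < A) :
    Ideal.span {xR κ - yR κ ^ A, xR κ - yR κ ^ B} = Ideal.span {xR κ, yR κ ^ B} := by
  have hpow : yR κ ^ (A - B) * yR κ ^ B = yR κ ^ A := by
    rw [← pow_add, Nat.sub_add_cancel hAB.le]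
  have hnotmem : (1 - X 1 ^ (A - B) : MvPolynomial (Fin 2) κ) ∈ (xyIdeal κ).primeCompl := by
    intro h
    have h : (1 - X 1 ^ (A - B) : MvPolynomial (Fin 2) κ) ∈ xyIdeal κ := h
    rw [mem_xyIdeal_iff] at h
    simp [map_sub, map_pow, zero_pow (Nat.sub_ne_zero_of_lt hAB)] at h
  have hu : IsUnit (1 - yR κ ^ (A - B)) := by
    have := IsLocalization.map_units (Rloc κ) (⟨_, hnotmem⟩ : (xyIdeal κ).primeCompl)
    simpa [yR, map_sub, map_pow, map_one] using this
  obtain ⟨w, hw⟩ := hu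
  have hxw : (↑w⁻¹ : Rloc κ) * (1 - yR κ ^ (A - B)) = 1 := by
    rw [← hw]; exact_mod_cast w.inv_mul
  have hyB : yR κ ^ B ∈ Ideal.span {xR κ - yR κ ^ A, xR κ - yR κ ^ B} := by
    rw [Ideal.mem_span_pair]
    refine ⟨(↑w⁻¹ : Rloc κ), -(↑w⁻¹ : Rloc κ), ?_⟩
    rw [← hpow]
    linear_combination yR κ ^ B * hxw
  apply le_antisymm
  · rw [Ideal.span_le]
    rintro z hz
    simp only [Set.mem_insert_iff, Set.mem_singleton_iff] at hz
    rcases hz with rfl | rfl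
    · exact Ideal.mem_span_pair.mpr ⟨1, -(yR κ ^ (A - B)), by rw [← hpow]; ring⟩
    · exact Ideal.mem_span_pair.mpr ⟨1, -1, by ring⟩
  · have hx : xR κ ∈ Ideal.span {xR κ - yR κ ^ A, xR κ - yR κ ^ B} := by
      have h2 : xR κ - yR κ ^ B ∈ Ideal.span {xR κ - yR κ ^ A, xR κ - yR κ ^ B} :=
        Ideal.subset_span (by simp)
      have := Ideal.add_mem _ h2 hyB
      simpa using this
    rw [Ideal.span_le, Set.insert_subset_iff, Set.singleton_subset_iff]
    exact ⟨hx, hyB⟩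

/-- The ideal `(x, y^B)` in `R`. -/
noncomputable abbrev JIdeal : Ideal (Rloc κ) := Ideal.span {xR κ, yR κ ^ B}

lemma map_IIdeal_le :
    Ideal.map (algebraMap (MvPolynomial (Fin 2) κ) (Rloc κ)) (IIdeal κ B) ≤ JIdeal κ B := by
  rw [IIdeal, Ideal.map_span, Set.image_pair, map_pow]
  exact le_of_eq rfl

open Polynomial in
noncomputable def Fhom : MvPolynomial (Fin 2) κ →ₐ[κ] AdjoinRoot ((X : κ[X]) ^ B) :=
  MvPolynomial.aeval ![0, AdjoinRoot.root _]

open Polynomial in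
lemma root_pow_eq_zero : (AdjoinRoot.root ((X : κ[X]) ^ B)) ^ B = 0 := by
  rw [← AdjoinRoot.mk_X, ← map_pow, AdjoinRoot.mk_self]

open Polynomial in
lemma Fhom_vanish : ∀ a ∈ IIdeal κ B, Fhom κ B a = 0 := by
  intro a ha
  have hle : IIdeal κ B ≤ RingHom.ker (Fhom κ B).toRingHom := by
    rw [Ideal.span_le]
    rintro z hz
    simp only [Set.mem_insert_iff, Set.mem_singleton_iff] at hz
    rcases hz with rfl | rfl
    · exact RingHom.mem_ker.mpr (by simp [Fhom])
    · exact RingHom.mem_ker.mpr (by simp [Fhom, root_pow_eq_zero])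
  exact hle ha

open Polynomial in
noncomputable def Fbar : (MvPolynomial (Fin 2) κ ⧸ IIdeal κ B) →ₐ[κ] AdjoinRoot ((X : κ[X]) ^ B) :=
  Ideal.Quotient.liftₐ (IIdeal κ B) (Fhom κ B) (Fhom_vanish κ B)

open Polynomial in
noncomputable def Ghom : AdjoinRoot ((X : κ[X]) ^ B) →ₐ[κ] (MvPolynomial (Fin 2) κ ⧸ IIdeal κ B) :=
  AdjoinRoot.liftAlgHom _ (Algebra.ofId κ _) (Ideal.Quotient.mk (IIdeal κ B) (MvPolynomial.X 1)) (by
    show Polynomial.aeval (Ideal.Quotient.mk (IIdeal κ B) (MvPolynomial.X 1)) _ = 0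
    rw [map_pow, Polynomial.aeval_X, ← map_pow, Ideal.Quotient.eq_zero_iff_mem]
    exact Ideal.subset_span (by simp))

open Polynomial in
noncomputable def quotEquivAdjoin :
    (MvPolynomial (Fin 2) κ ⧸ IIdeal κ B) ≃ₐ[κ] AdjoinRoot ((X : κ[X]) ^ B) := by
  refine AlgEquiv.ofAlgHom (Fbar κ B) (Ghom κ B) ?_ ?_
  · apply AdjoinRoot.algHom_ext
    simp [Fbar, Ghom, Fhom, AdjoinRoot.liftAlgHom_root, Ideal.Quotient.liftₐ_apply,
      Ideal.Quotient.lift_mk]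
    erw [Ideal.Quotient.lift_mk]
    simp
  · apply Ideal.Quotient.algHom_ext
    apply MvPolynomial.algHom_ext
    intro i
    fin_cases i
    · have h0 : Ideal.Quotient.mk (IIdeal κ B) (MvPolynomial.X 0) = 0 := by
        rw [Ideal.Quotient.eq_zero_iff_mem]; exact Ideal.subset_span (by simp)
      simp [Fbar, Ghom, Fhom, Ideal.Quotient.mkₐ_eq_mk, Ideal.Quotient.liftₐ_apply,
        Ideal.Quotient.lift_mk, h0]
    · simp [Fbar, Ghom, Fhom, Ideal.Quotient.mkₐ_eq_mk, Ideal.Quotient.liftₐ_apply,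
        Ideal.Quotient.lift_mk, AdjoinRoot.liftAlgHom_root]
      erw [Ideal.Quotient.lift_mk]
      simp

noncomputable def fzero : (MvPolynomial (Fin 2) κ ⧸ IIdeal κ B) →+* (Rloc κ ⧸ JIdeal κ B) :=
  Ideal.Quotient.lift (IIdeal κ B)
    ((Ideal.Quotient.mk (JIdeal κ B)).comp (algebraMap (MvPolynomial (Fin 2) κ) (Rloc κ)))
    (by
      intro a ha
      simp only [RingHom.comp_apply, Ideal.Quotient.eq_zero_iff_mem]
      exact map_IIdeal_le κ B (Ideal.mem_map_of_mem _ ha))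

lemma lift_units (y : (xyIdeal κ).primeCompl) :
    IsUnit (Ideal.Quotient.mk (IIdeal κ B) (y : MvPolynomial (Fin 2) κ)) := by
  apply isUnit_mk_of_constantCoeff_ne_zero
  intro h
  exact y.2 ((mem_xyIdeal_iff κ _).mpr h)

noncomputable def ghom : Rloc κ →+* (MvPolynomial (Fin 2) κ ⧸ IIdeal κ B) :=
  IsLocalization.lift (M := (xyIdeal κ).primeCompl) (lift_units κ B)

lemma ghom_vanish : ∀ a ∈ JIdeal κ B, ghom κ B a = 0 := by
  intro a ha
  have hle : JIdeal κ B ≤ RingHom.ker (ghom κ B) := by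
    rw [Ideal.span_le]
    rintro z hz
    simp only [Set.mem_insert_iff, Set.mem_singleton_iff] at hz
    rcases hz with rfl | rfl
    · refine RingHom.mem_ker.mpr ?_
      show ghom κ B (algebraMap (MvPolynomial (Fin 2) κ) (Rloc κ) (X 0)) = 0
      rw [ghom, IsLocalization.lift_eq, Ideal.Quotient.eq_zero_iff_mem]
      exact Ideal.subset_span (by simp)
    · refine RingHom.mem_ker.mpr ?_
      rw [map_pow]
      show (ghom κ B (algebraMap (MvPolynomial (Fin 2) κ) (Rloc κ) (X 1))) ^ B = 0
      rw [ghom, IsLocalization.lift_eq, ← map_pow, Ideal.Quotient.eq_zero_iff_mem]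
      exact Ideal.subset_span (by simp)
  exact hle ha

noncomputable def gbar : (Rloc κ ⧸ JIdeal κ B) →+* (MvPolynomial (Fin 2) κ ⧸ IIdeal κ B) :=
  Ideal.Quotient.lift (JIdeal κ B) (ghom κ B) (ghom_vanish κ B)

noncomputable def quotRingEquiv :
    (MvPolynomial (Fin 2) κ ⧸ IIdeal κ B) ≃+* (Rloc κ ⧸ JIdeal κ B) := by
  refine RingEquiv.ofRingHom (fzero κ B) (gbar κ B) ?_ ?_
  swap
  · apply Ideal.Quotient.ringHom_ext
    refine RingHom.ext fun s => ?_
    simp only [RingHom.comp_apply, RingHom.id_apply]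
    show gbar κ B (fzero κ B (Ideal.Quotient.mk _ s)) = Ideal.Quotient.mk _ s
    rw [fzero, Ideal.Quotient.lift_mk, RingHom.comp_apply, gbar, Ideal.Quotient.lift_mk,
      ghom, IsLocalization.lift_eq]
  · apply Ideal.Quotient.ringHom_ext
    apply IsLocalization.ringHom_ext (xyIdeal κ).primeCompl
    refine RingHom.ext fun s => ?_
    simp only [RingHom.comp_apply, RingHom.id_apply]
    show fzero κ B (gbar κ B (Ideal.Quotient.mk _ (algebraMap _ _ s))) =
      Ideal.Quotient.mk _ (algebraMap _ _ s)
    rw [gbar, Ideal.Quotient.lift_mk, ghom, IsLocalization.lift_eq, fzero,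
      Ideal.Quotient.lift_mk, RingHom.comp_apply]

noncomputable def quotAlgEquiv :
    (MvPolynomial (Fin 2) κ ⧸ IIdeal κ B) ≃ₐ[κ] (Rloc κ ⧸ JIdeal κ B) := by
  refine AlgEquiv.ofRingEquiv (f := quotRingEquiv κ B) ?_
  intro c
  rw [IsScalarTower.algebraMap_apply κ (MvPolynomial (Fin 2) κ)
    (MvPolynomial (Fin 2) κ ⧸ IIdeal κ B),
    IsScalarTower.algebraMap_apply κ (Rloc κ) (Rloc κ ⧸ JIdeal κ B),
    IsScalarTower.algebraMap_apply κ (MvPolynomial (Fin 2) κ) (Rloc κ)]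
  show fzero κ B (Ideal.Quotient.mk _ _) = _
  simp [fzero, Ideal.Quotient.lift_mk, Ideal.Quotient.algebraMap_eq]

open Polynomial in
lemma finrank_adjoinRoot : Module.finrank κ (AdjoinRoot ((X : κ[X]) ^ B)) = B := by
  rw [(AdjoinRoot.powerBasis (f := (X : κ[X]) ^ B) (pow_ne_zero _ X_ne_zero)).finrank]
  simp [AdjoinRoot.powerBasis]

lemma finrank_quot : Module.finrank κ (Rloc κ ⧸ JIdeal κ B) = B := by
  exact (((quotEquivAdjoin κ B).symm.trans
    (quotAlgEquiv κ B)).symm.toLinearEquiv.finrank_eq).trans (finrank_adjoinRoot κ B)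

end Aux

/-- For integers `A > B ≥ 1`, in the localization `R` of `κ[x,y]` at the maximal ideal `(x,y)`
one has the equality of ideals `(x - y^A, x - y^B) = (x, y^B)`, and consequently the quotient
ring `R/(x - y^A, x - y^B)` has dimension `B` as a `κ`-vector space. -/
theorem stmt_2 (κ : Type) [Field κ] (A B : ℕ) (hB : 1 ≤ B) (hAB : B < A) :
    Ideal.span {xR κ - yR κ ^ A, xR κ - yR κ ^ B} = Ideal.span {xR κ, yR κ ^ B} ∧
    Module.finrank κ
      (Rloc κ ⧸ Ideal.span {xR κ - yR κ ^ A, xR κ - yR κ ^ B}) = B := by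
  have h1 := span_xyB_eq κ B A hAB
  refine ⟨h1, ?_⟩
  rw [h1]
  exact finrank_quot κ B
end

section
/- For every prime p, every integer n ≥ 2 and every integer a with 1 ≤ a ≤ n−1, (p−1)·Σ_{a'∈{0,…,n}, a'≠a} φ(p^{min(a', n−a')})·c(a,a') = 2·p^{|n−2a|}·φ(p^{min(a, n−a)}), where c(a,a') = p^{min(|n−2a|,|n−2a'|)} if (n−2a)(n−2a') > 0 and c(a,a') = 1 otherwise. (This is the weighted row identity for an interior Igusa component C′_a of the special fibre of the Edixhoven model of X₀(pⁿM), underlying its self-intersection formula.) -/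
open Finset

lemma sum_tot (p : ℕ) (hp : p.Prime) (K : ℕ) :
    ∑ k ∈ range (K + 1), Nat.totient (p ^ k) = p ^ K := by
  induction K with
  | zero => simp
  | succ K ih =>
    rw [sum_range_succ, ih, Nat.totient_prime_pow hp (Nat.succ_pos K)]
    have h1 : 1 ≤ p := hp.one_lt.le
    have : p ^ (K + 1 - 1) = p ^ K := by norm_num
    rw [this, pow_succ]
    have h2 : 1 + (p - 1) = p := by omega
    calc p ^ K + p ^ K * (p - 1) = p ^ K * (1 + (p - 1)) := by ring
    _ = p ^ K * p := by rw [h2]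

lemma telescope (p n s : ℕ) (hp : p.Prime) (hs : 1 ≤ s) :
    ∀ t, s ≤ t → 2 * t ≤ n + 1 →
    (∑ j ∈ Ico s t, Nat.totient (p ^ j) * p ^ (n - 2 * j)) + p ^ (n - t) = p ^ (n - s) := by
  intro t
  induction t with
  | zero => intro h1 _; omega
  | succ t ih =>
    intro h1 h2
    rcases eq_or_lt_of_le h1 with h | h
    · rw [← h]; simp
    · have hst : s ≤ t := by omega
      have ht1 : 1 ≤ t := by omega
      have h2t : 2 * t < n := by omega
      rw [sum_Ico_succ_top hst]
      have key : Nat.totient (p ^ t) * p ^ (n - 2 * t) + p ^ (n - (t + 1)) = p ^ (n - t) := by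
        rw [Nat.totient_prime_pow hp (by omega : 0 < t)]
        have e1 : p ^ (t - 1) * (p - 1) * p ^ (n - 2 * t) = p ^ (n - t - 1) * (p - 1) := by
          rw [mul_right_comm, ← pow_add]
          congr 2
          omega
        rw [e1]
        have e2 : n - (t + 1) = n - t - 1 := by omega
        rw [e2]
        have e3 : p ^ (n - t) = p ^ (n - t - 1) * p := by rw [← pow_succ]; congr 1; omega
        rw [e3]
        have h1p : 1 ≤ p := hp.one_lt.le
        calc p ^ (n - t - 1) * (p - 1) + p ^ (n - t - 1)
            = p ^ (n - t - 1) * (p - 1 + 1) := by ring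
          _ = p ^ (n - t - 1) * p := by congr 1; omega
      rw [add_assoc, key, ih hst (by omega)]

lemma refl_sum (p n s : ℕ) (hp : p.Prime) (hs : s ≤ n) :
    ∑ x ∈ Ico s (n + 1), Nat.totient (p ^ (n - x)) = p ^ (n - s) := by
  rw [sum_Ico_eq_sum_range]
  have hc : n + 1 - s = (n - s) + 1 := by omega
  rw [hc]
  have : ∀ j ∈ range ((n - s) + 1),
      Nat.totient (p ^ (n - (s + j))) = Nat.totient (p ^ ((n - s) + 1 - 1 - j)) := by
    intro j hj
    simp only [mem_range] at hj
    congr 2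
    omega
  rw [sum_congr rfl this]
  exact (sum_range_reflect (fun j => Nat.totient (p ^ j)) ((n - s) + 1)).trans
    (sum_tot p hp (n - s))

lemma aux4 (p n a : ℕ) (hp : p.Prime) (hn : 2 ≤ n) (ha1 : 1 ≤ a) (h2 : 2 * a ≤ n) :
    (p - 1) *
      ∑ a' ∈ (Finset.range (n + 1)).erase a,
        Nat.totient (p ^ min a' (n - a')) *
          (if 0 < ((n : ℤ) - 2 * a) * ((n : ℤ) - 2 * a') then
            p ^ min ((n : ℤ) - 2 * a).natAbs ((n : ℤ) - 2 * a').natAbs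
          else 1)
      = 2 * p ^ ((n : ℤ) - 2 * a).natAbs * Nat.totient (p ^ min a (n - a)) := by
  have hsplit : (range (n + 1)).erase a = Ico 0 a ∪ Ico (a + 1) (n + 1) := by
    ext x
    simp only [mem_erase, mem_range, mem_union, mem_Ico]
    omega
  have hdisj : Disjoint (Ico 0 a) (Ico (a + 1) (n + 1)) := by
    rw [Finset.disjoint_left]
    intro x hx hx'
    simp only [mem_Ico] at hx hx'
    omega
  rw [hsplit, sum_union hdisj]
  rcases eq_or_lt_of_le h2 with heq | hlt
  · -- middle component: 2a = n
    have e0 : ((n : ℤ) - 2 * a) = 0 := by omega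
    rw [e0]
    simp only [zero_mul, lt_self_iff_false, if_false, mul_one, Int.natAbs_zero, pow_zero]
    have hmin : min a (n - a) = a := by omega
    have p1 : ∑ a' ∈ Ico 0 a, Nat.totient (p ^ min a' (n - a')) = p ^ (a - 1) := by
      have hc : ∀ x ∈ Ico 0 a, Nat.totient (p ^ min x (n - x)) = Nat.totient (p ^ x) := by
        intro x hx
        simp only [mem_Ico] at hx
        congr 2
        omega
      rw [sum_congr rfl hc]
      have : Ico 0 a = range ((a - 1) + 1) := by
        rw [show (a - 1) + 1 = a from by omega, range_eq_Ico]
      rw [this, sum_tot p hp]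
    have p2 : ∑ a' ∈ Ico (a + 1) (n + 1), Nat.totient (p ^ min a' (n - a')) = p ^ (a - 1) := by
      have hc : ∀ x ∈ Ico (a + 1) (n + 1),
          Nat.totient (p ^ min x (n - x)) = Nat.totient (p ^ (n - x)) := by
        intro x hx
        simp only [mem_Ico] at hx
        congr 2
        omega
      rw [sum_congr rfl hc, refl_sum p n (a + 1) hp (by omega)]
      congr 1
      omega
    rw [hmin, p1, p2, Nat.totient_prime_pow hp (by omega : 0 < a)]
    ring
  · -- interior component 2a < n
    set H := (n + 1) / 2 with hH
    have hH1 : a + 1 ≤ H := by omega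
    have hH2 : H ≤ n + 1 := by omega
    rw [← sum_Ico_consecutive _ hH1 hH2]
    have p1 : ∑ x ∈ Ico 0 a,
        Nat.totient (p ^ min x (n - x)) *
          (if 0 < ((n : ℤ) - 2 * a) * ((n : ℤ) - 2 * x) then
            p ^ min ((n : ℤ) - 2 * a).natAbs ((n : ℤ) - 2 * x).natAbs
          else 1) = p ^ (n - a - 1) := by
      have hc : ∀ x ∈ Ico 0 a,
          Nat.totient (p ^ min x (n - x)) *
            (if 0 < ((n : ℤ) - 2 * a) * ((n : ℤ) - 2 * x) then
              p ^ min ((n : ℤ) - 2 * a).natAbs ((n : ℤ) - 2 * x).natAbs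
            else 1) = Nat.totient (p ^ x) * p ^ (n - 2 * a) := by
        intro x hx
        simp only [mem_Ico] at hx
        have hcond : 0 < ((n : ℤ) - 2 * a) * ((n : ℤ) - 2 * x) :=
          mul_pos (by omega) (by omega)
        rw [if_pos hcond, show min x (n - x) = x from by omega,
          show min ((n : ℤ) - 2 * a).natAbs ((n : ℤ) - 2 * x).natAbs = n - 2 * a from by omega]
      rw [sum_congr rfl hc, ← sum_mul]
      have : Ico 0 a = range ((a - 1) + 1) := by
        rw [show (a - 1) + 1 = a from by omega, range_eq_Ico]
      rw [this, sum_tot p hp, ← pow_add]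
      congr 1
      omega
    have p2 : ∑ x ∈ Ico (a + 1) H,
        Nat.totient (p ^ min x (n - x)) *
          (if 0 < ((n : ℤ) - 2 * a) * ((n : ℤ) - 2 * x) then
            p ^ min ((n : ℤ) - 2 * a).natAbs ((n : ℤ) - 2 * x).natAbs
          else 1) = ∑ x ∈ Ico (a + 1) H, Nat.totient (p ^ x) * p ^ (n - 2 * x) := by
      apply sum_congr rfl
      intro x hx
      simp only [mem_Ico, hH] at hx
      have h2x : 2 * x < n := by omega
      have hcond : 0 < ((n : ℤ) - 2 * a) * ((n : ℤ) - 2 * x) :=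
        mul_pos (by omega) (by omega)
      rw [if_pos hcond, show min x (n - x) = x from by omega,
        show min ((n : ℤ) - 2 * a).natAbs ((n : ℤ) - 2 * x).natAbs = n - 2 * x from by omega]
    have p3 : ∑ x ∈ Ico H (n + 1),
        Nat.totient (p ^ min x (n - x)) *
          (if 0 < ((n : ℤ) - 2 * a) * ((n : ℤ) - 2 * x) then
            p ^ min ((n : ℤ) - 2 * a).natAbs ((n : ℤ) - 2 * x).natAbs
          else 1) = p ^ (n - H) := by
      have hc : ∀ x ∈ Ico H (n + 1),
          Nat.totient (p ^ min x (n - x)) *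
            (if 0 < ((n : ℤ) - 2 * a) * ((n : ℤ) - 2 * x) then
              p ^ min ((n : ℤ) - 2 * a).natAbs ((n : ℤ) - 2 * x).natAbs
            else 1) = Nat.totient (p ^ (n - x)) := by
        intro x hx
        simp only [mem_Ico, hH] at hx
        have h2x : n ≤ 2 * x := by omega
        have hcond : ¬ 0 < ((n : ℤ) - 2 * a) * ((n : ℤ) - 2 * x) := by
          apply not_lt.mpr
          apply mul_nonpos_of_nonneg_of_nonpos (by omega) (by omega)
        rw [if_neg hcond, mul_one, show min x (n - x) = n - x from by omega]
      rw [sum_congr rfl hc, refl_sum p n H hp (by omega)]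
    rw [p1, p2, p3, telescope p n (a + 1) hp (by omega) H hH1 (by omega)]
    rw [show ((n : ℤ) - 2 * a).natAbs = n - 2 * a from by omega,
      show min a (n - a) = a from by omega,
      Nat.totient_prime_pow hp (by omega : 0 < a)]
    have e : 2 * p ^ (n - 2 * a) * (p ^ (a - 1) * (p - 1))
        = 2 * (p ^ (n - 2 * a) * p ^ (a - 1)) * (p - 1) := by ring
    rw [e, ← pow_add, show n - 2 * a + (a - 1) = n - (a + 1) from by omega,
      show n - a - 1 = n - (a + 1) from by omega]
    ring



/-- For every prime `p`, every integer `n ≥ 2` and every `1 ≤ a ≤ n−1`,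
`(p−1)·Σ_{a'∈{0,…,n}, a'≠a} φ(p^{min(a', n−a')})·c(a,a') = 2·p^{|n−2a|}·φ(p^{min(a, n−a)})`,
where `c(a,a') = p^{min(|n−2a|,|n−2a'|)}` if `(n−2a)(n−2a') > 0` and `c(a,a') = 1`
otherwise (`φ` is Euler's totient function).  This is the weighted row identity for an
interior Igusa component `C′_a` of the special fibre of the Edixhoven model of `X₀(pⁿM)`. -/
theorem stmt_4 (p n a : ℕ) (hp : p.Prime) (hn : 2 ≤ n) (ha1 : 1 ≤ a) (ha2 : a ≤ n - 1) :
    (p - 1) *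
      ∑ a' ∈ (Finset.range (n + 1)).erase a,
        Nat.totient (p ^ min a' (n - a')) *
          (if 0 < ((n : ℤ) - 2 * a) * ((n : ℤ) - 2 * a') then
            p ^ min ((n : ℤ) - 2 * a).natAbs ((n : ℤ) - 2 * a').natAbs
          else 1)
      = 2 * p ^ ((n : ℤ) - 2 * a).natAbs * Nat.totient (p ^ min a (n - a)) := by
  
  rcases le_or_gt (2 * a) n with h | h
  · exact aux4 p n a hp hn ha1 h
  · have key := aux4 p n (n - a) hp hn (by omega) (by omega)
    have hsum : ∑ a' ∈ (Finset.range (n + 1)).erase a,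
        Nat.totient (p ^ min a' (n - a')) *
          (if 0 < ((n : ℤ) - 2 * a) * ((n : ℤ) - 2 * a') then
            p ^ min ((n : ℤ) - 2 * a).natAbs ((n : ℤ) - 2 * a').natAbs
          else 1)
        = ∑ a' ∈ (Finset.range (n + 1)).erase (n - a),
        Nat.totient (p ^ min a' (n - a')) *
          (if 0 < ((n : ℤ) - 2 * (n - a : ℕ)) * ((n : ℤ) - 2 * a') then
            p ^ min ((n : ℤ) - 2 * (n - a : ℕ)).natAbs ((n : ℤ) - 2 * a').natAbs
          else 1) := by
      apply Finset.sum_nbij' (i := fun a' => n - a') (j := fun a' => n - a')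
      · intro x hx
        simp only [mem_erase, mem_range] at hx ⊢
        omega
      · intro x hx
        simp only [mem_erase, mem_range] at hx ⊢
        omega
      · intro x hx
        simp only [mem_erase, mem_range] at hx
        omega
      · intro x hx
        simp only [mem_erase, mem_range] at hx
        omega
      · intro x hx
        simp only [mem_erase, mem_range] at hx
        have e1 : ((n : ℤ) - 2 * ((n - a : ℕ) : ℤ)) = -((n : ℤ) - 2 * a) := by omega
        have e2 : ((n : ℤ) - 2 * ((n - x : ℕ) : ℤ)) = -((n : ℤ) - 2 * x) := by omega
        rw [e1, e2, neg_mul_neg, Int.natAbs_neg, Int.natAbs_neg,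
          show n - (n - x) = x from by omega, min_comm x (n - x)]
    rw [hsum, key, show ((n : ℤ) - 2 * ((n - a : ℕ) : ℤ)).natAbs = ((n : ℤ) - 2 * a).natAbs
      from by omega, show min (n - a) (n - (n - a)) = min a (n - a) from by omega]
end

section
/- As N → ∞ along integers N > 1 coprime to 6, Σ_{p | N} f(p, n_p, M_p)·log p/(12·d(N)·(p−1)) = o(g(N)·log N); that is, the total correction term to the vertical contribution of the self-intersection of the Arakelov canonical sheaf is negligible compared to g(N)·log N. -/
open Finset Filter

/-- The multiplicative arithmetic function with `d 1 = 1` and `d (q^r) = q^(r-1) * (q+1)`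
on prime powers `q^r`. -/
def dArith (m : ℕ) : ℕ :=
  ∏ q ∈ m.primeFactors, q ^ (m.factorization q - 1) * (q + 1)

/-- The multiplicative arithmetic function ε₂ with `ε₂ 1 = 1`, `ε₂ (2^r) = 0` for `r ≥ 2` and
`ε₂ (q^r) = 1 + (−1/q)` (Kronecker symbol) otherwise; for odd `q` the Kronecker symbol
`(−1/q)` is the Jacobi symbol, and `(−1/2) = 1 = jacobiSym (-1) 2`. -/
def eps2 (m : ℕ) : ℕ :=
  ∏ q ∈ m.primeFactors,
    if q = 2 ∧ 2 ≤ m.factorization q then 0 else (1 + jacobiSym (-1) q).toNat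

/-- The multiplicative arithmetic function ε₃ with `ε₃ 1 = 1`, `ε₃ (3^r) = 0` for `r ≥ 2` and
`ε₃ (q^r) = 1 + (−3/q)` (Kronecker symbol) otherwise; for odd `q` the Kronecker symbol
`(−3/q)` is the Jacobi symbol, and `(−3/2) = −1`, so the factor at `q = 2` vanishes. -/
def eps3 (m : ℕ) : ℕ :=
  ∏ q ∈ m.primeFactors,
    if q = 3 ∧ 2 ≤ m.factorization q then 0
    else if q = 2 then 0 else (1 + jacobiSym (-3) q).toNat

/-- The multiplicative arithmetic function ε_∞ with `ε_∞ 1 = 1`,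
`ε_∞ (q^r) = q^(r/2−1) * (q+1)` for even `r` and `ε_∞ (q^r) = 2 * q^((r−1)/2)` for odd `r`. -/
def epsInf (m : ℕ) : ℕ :=
  ∏ q ∈ m.primeFactors,
    if Even (m.factorization q) then q ^ (m.factorization q / 2 - 1) * (q + 1)
    else 2 * q ^ ((m.factorization q - 1) / 2)

/-- `g(m) = 1 + d(m)/12 − ε₂(m)/4 − ε₃(m)/3 − ε_∞(m)/2`, the genus of the modular curve
`X₀(m)` for `m > 2` coprime to 6. -/
def genusX0 (m : ℕ) : ℚ :=
  1 + (dArith m : ℚ) / 12 - (eps2 m : ℚ) / 4 - (eps3 m : ℚ) / 3 - (epsInf m : ℚ) / 2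

/-- The quantity `f(p,n,M)`. -/
noncomputable def fCorr (p n M : ℕ) : ℚ :=
  let N := p ^ n * M
  let D : ℚ := (dArith N : ℚ)
  let P : ℚ := (p : ℚ)
  let ξ3 : ℚ := if p % 3 = 1 then 0 else 1
  2 * D ^ 2 - 8 * D * (dArith M : ℚ) * (P ^ (n - 1) - 1)
    - 6 * ((n : ℚ) * (P - 1) - 4) * D * (epsInf N : ℚ) - 96 * D * (epsInf M : ℚ)
    - (3 * ((eps2 N : ℚ) + 2 * (eps3 N : ℚ) - 4) * (n : ℚ) - 2 * (eps3 N : ℚ)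
        + 2 * (1 + (-1 : ℚ) ^ n) * (ξ3 * (eps3 M : ℚ) - 9 * (if M = 1 then (1 : ℚ) else 0)))
      * D * (P - 1)
    + 4 * (12 - 3 * (eps2 N : ℚ) - 4 * (eps3 N : ℚ)) * D
    + 144 * (dArith (p ^ n) : ℚ) * ((epsInf M : ℚ)) ^ 2
    + 12 * ((n : ℚ) * (P - 1) + 2) * (3 * (eps2 N : ℚ) + 4 * (eps3 N : ℚ) - 12) * (epsInf N : ℚ)
    + 2 * ((n : ℚ) * (P - 1) + 2) *
        (9 * (eps2 N : ℚ) * ((eps2 M : ℚ) - 4) + 16 * (eps3 N : ℚ) * ((eps3 M : ℚ) - 3)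
          + 12 * (eps2 N : ℚ) * (eps3 N : ℚ))


set_option maxHeartbeats 1000000

section helpers

lemma prod_pf_mul (h : ℕ → ℕ → ℕ) {a b : ℕ} (ha : a ≠ 0) (hb : b ≠ 0)
    (hab : a.Coprime b) :
    ∏ q ∈ (a*b).primeFactors, h q ((a*b).factorization q)
      = (∏ q ∈ a.primeFactors, h q (a.factorization q)) *
        (∏ q ∈ b.primeFactors, h q (b.factorization q)) := by
  rw [Nat.primeFactors_mul ha hb, Finset.prod_union hab.disjoint_primeFactors]
  congr 1
  · refine Finset.prod_congr rfl fun q hq => ?_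
    rw [Nat.factorization_mul ha hb]
    have : b.factorization q = 0 := Nat.factorization_eq_zero_of_not_dvd
      (fun hd => (Nat.Prime.not_dvd_one (Nat.prime_of_mem_primeFactors hq))
        (hab ▸ Nat.dvd_gcd (Nat.dvd_of_mem_primeFactors hq) hd))
    simp [this]
  · refine Finset.prod_congr rfl fun q hq => ?_
    rw [Nat.factorization_mul ha hb]
    have : a.factorization q = 0 := Nat.factorization_eq_zero_of_not_dvd
      (fun hd => (Nat.Prime.not_dvd_one (Nat.prime_of_mem_primeFactors hq))
        (hab ▸ Nat.dvd_gcd hd (Nat.dvd_of_mem_primeFactors hq)))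
    simp [this]

lemma dArith_mul {a b : ℕ} (ha : a ≠ 0) (hb : b ≠ 0) (hab : a.Coprime b) :
    dArith (a*b) = dArith a * dArith b :=
  prod_pf_mul (fun q r => q ^ (r-1) * (q+1)) ha hb hab
lemma eps2_mul {a b : ℕ} (ha : a ≠ 0) (hb : b ≠ 0) (hab : a.Coprime b) :
    eps2 (a*b) = eps2 a * eps2 b :=
  prod_pf_mul (fun q r => if q = 2 ∧ 2 ≤ r then 0 else (1 + jacobiSym (-1) q).toNat) ha hb hab
lemma eps3_mul {a b : ℕ} (ha : a ≠ 0) (hb : b ≠ 0) (hab : a.Coprime b) :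
    eps3 (a*b) = eps3 a * eps3 b :=
  prod_pf_mul (fun q r => if q = 3 ∧ 2 ≤ r then 0
    else if q = 2 then 0 else (1 + jacobiSym (-3) q).toNat) ha hb hab
lemma epsInf_mul {a b : ℕ} (ha : a ≠ 0) (hb : b ≠ 0) (hab : a.Coprime b) :
    epsInf (a*b) = epsInf a * epsInf b :=
  prod_pf_mul (fun q r => if Even r then q ^ (r/2 - 1) * (q+1) else 2 * q ^ ((r-1)/2)) ha hb hab

lemma prod_pow_factorization (m : ℕ) (hm : m ≠ 0) :
    ∏ q ∈ m.primeFactors, q ^ m.factorization q = m := by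
  rw [← Nat.support_factorization]
  exact Nat.factorization_prod_pow_eq_self hm

lemma dArith_pos (m : ℕ) : 0 < dArith m := by
  refine Finset.prod_pos fun q hq => ?_
  have := (Nat.prime_of_mem_primeFactors hq).two_le
  positivity

lemma le_dArith (m : ℕ) (hm : m ≠ 0) : m ≤ dArith m := by
  conv_lhs => rw [← prod_pow_factorization m hm]
  refine Finset.prod_le_prod' fun q hq => ?_
  have h2 := (Nat.prime_of_mem_primeFactors hq).two_le
  rcases Nat.eq_zero_or_pos (m.factorization q) with h | h
  · simp [h]
  · have e : q ^ m.factorization q = q ^ (m.factorization q - 1) * q := by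
      rw [← pow_succ]; congr 1; omega
    rw [e]
    exact Nat.mul_le_mul_left _ (by omega)

lemma five_le_of_mem {m q : ℕ} (hq : q ∈ m.primeFactors) (hm : Nat.Coprime m 6) : 5 ≤ q := by
  have hp := Nat.prime_of_mem_primeFactors hq
  have hd := Nat.dvd_of_mem_primeFactors hq
  have h2 : q ≠ 2 := by
    rintro rfl
    have : (2:ℕ) ∣ Nat.gcd m 6 := Nat.dvd_gcd hd (by norm_num)
    rw [hm] at this; norm_num at this
  have h3 : q ≠ 3 := by
    rintro rfl
    have : (3:ℕ) ∣ Nat.gcd m 6 := Nat.dvd_gcd hd (by norm_num)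
    rw [hm] at this; norm_num at this
  have := hp.two_le
  rcases Nat.lt_or_ge q 5 with h | h
  · interval_cases q <;> simp_all (config := {decide := true})
  · exact h

lemma jacobi_factor_le (a : ℤ) (q : ℕ) : (1 + jacobiSym a q).toNat ≤ 2 := by
  rcases jacobiSym.trichotomy a q with h | h | h <;> simp [h]

lemma eps2_le_dArith (m : ℕ) : eps2 m ≤ dArith m := by
  refine Finset.prod_le_prod' fun q hq => ?_
  have h2 := (Nat.prime_of_mem_primeFactors hq).two_le
  have hf : (if q = 2 ∧ 2 ≤ m.factorization q then 0
      else (1 + jacobiSym (-1) q).toNat) ≤ 2 := by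
    split
    · omega
    · exact jacobi_factor_le _ _
  calc _ ≤ 2 := hf
    _ ≤ q ^ (m.factorization q - 1) * (q+1) := by nlinarith [Nat.one_le_two_pow (n := m.factorization q - 1), Nat.pow_le_pow_left h2 (m.factorization q -1), Nat.one_le_iff_ne_zero.mpr (pow_ne_zero (m.factorization q - 1) (by omega : q ≠ 0))]

end helpers

section more
lemma factor_le_dfactor (q r : ℕ) (h2 : 2 ≤ q) (f : ℕ) (hf : f ≤ 2) :
    f ≤ q ^ (r - 1) * (q+1) := by
  have h1 : 1 ≤ q ^ (r-1) := Nat.one_le_iff_ne_zero.mpr (pow_ne_zero _ (by omega))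
  nlinarith

lemma eps3_le_dArith (m : ℕ) : eps3 m ≤ dArith m := by
  refine Finset.prod_le_prod' fun q hq => ?_
  have h2 := (Nat.prime_of_mem_primeFactors hq).two_le
  refine factor_le_dfactor q _ h2 _ ?_
  split
  · omega
  · split
    · omega
    · exact jacobi_factor_le _ _

lemma epsInf_factor_le (q r : ℕ) (h2 : 2 ≤ q) (hr : 1 ≤ r) :
    (if Even r then q ^ (r / 2 - 1) * (q + 1) else 2 * q ^ ((r - 1) / 2))
      ≤ q ^ (r - 1) * (q+1) := by
  split
  · exact Nat.mul_le_mul_right _ (Nat.pow_le_pow_right (by omega) (by omega))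
  · have s1 : 2 * q ^ ((r-1)/2) ≤ q ^ (r-1) * 2 := by
      rw [mul_comm]
      exact Nat.mul_le_mul_right _ (Nat.pow_le_pow_right (by omega) (by omega))
    exact s1.trans (Nat.mul_le_mul_left _ (by omega))

lemma epsInf_le_dArith (m : ℕ) : epsInf m ≤ dArith m := by
  refine Finset.prod_le_prod' fun q hq => ?_
  obtain ⟨hp, hd, hm0⟩ := Nat.mem_primeFactors.mp hq
  exact epsInf_factor_le q _ hp.two_le (hp.factorization_pos_of_dvd hm0 hd)

lemma pow_le_pred_mul (q r : ℕ) : q^r ≤ q^(r-1)*(q+1) := by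
  rcases Nat.eq_zero_or_pos r with h | h
  · simp [h]
  · have e : q ^ r = q ^ (r - 1) * q := by
      rw [← pow_succ]; congr 1; omega
    rw [e]
    exact Nat.mul_le_mul_left _ (by omega)

lemma termwise_small (q r f : ℕ) (hq : 5 ≤ q) (hr : 1 ≤ r) (hf : f ≤ 2) :
    f^18 * q^(5*r) ≤ (q^(r-1)*(q+1))^18 := by
  calc f^18 * q^(5*r) ≤ 2^18 * q^(5*r) := by
        exact Nat.mul_le_mul_right _ (Nat.pow_le_pow_left hf 18)
    _ ≤ q^13 * q^(5*r) := by
        have h513 : (2:ℕ)^18 ≤ 5^13 := by norm_num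
        exact Nat.mul_le_mul_right _ (h513.trans (Nat.pow_le_pow_left hq 13))
    _ ≤ q^(13*r) * q^(5*r) := by
        exact Nat.mul_le_mul_right _ (Nat.pow_le_pow_right (by omega) (by omega))
    _ = (q^r)^18 := by rw [← pow_add, ← pow_mul]; congr 1; omega
    _ ≤ (q^(r-1)*(q+1))^18 := Nat.pow_le_pow_left (pow_le_pred_mul q r) 18

lemma termwise_inf (q r : ℕ) (hq : 5 ≤ q) (hr : 1 ≤ r) :
    (if Even r then q ^ (r / 2 - 1) * (q + 1) else 2 * q ^ ((r - 1) / 2))^18 * q^(5*r)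
      ≤ (q^(r-1)*(q+1))^18 := by
  by_cases he : Even r
  · simp only [he, if_true]
    obtain ⟨s, hs⟩ := he
    have e1 : (q^(r/2-1)*(q+1))^18 * q^(5*r) = (q+1)^18 * q^((r/2-1)*18 + 5*r) := by
      rw [mul_pow, ← pow_mul, mul_comm _ ((q+1)^18), mul_assoc, ← pow_add]
    have e2 : (q^(r-1)*(q+1))^18 = (q+1)^18 * q^((r-1)*18) := by
      rw [mul_pow, ← pow_mul, mul_comm]
    rw [e1, e2]
    exact Nat.mul_le_mul_left _ (Nat.pow_le_pow_right (by omega) (by omega))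
  · simp only [he, if_false]
    obtain ⟨s, hs⟩ := Nat.not_even_iff_odd.mp he
    have h18 : (2 * q ^ ((r - 1) / 2))^18 * q^(5*r) = 2^18 * q^(9*(r-1) + 5*r) := by
      rw [mul_pow, ← pow_mul, mul_assoc, ← pow_add]
      congr 2
      omega
    rw [h18]
    have h2 : (2:ℕ)^18 * q^(9*(r-1)+5*r) ≤ q^13 * q^(9*(r-1)+5*r) := by
      have h513 : (2:ℕ)^18 ≤ 5^13 := by norm_num
      exact Nat.mul_le_mul_right _ (h513.trans (Nat.pow_le_pow_left hq 13))
    refine h2.trans ?_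
    rw [← pow_add]
    calc q^(13 + (9*(r-1)+5*r)) ≤ q^(18*r) := Nat.pow_le_pow_right (by omega) (by omega)
      _ = (q^r)^18 := by rw [← pow_mul]; ring_nf
      _ ≤ (q^(r-1)*(q+1))^18 := Nat.pow_le_pow_left (pow_le_pred_mul q r) 18

lemma factorization_pos_of_mem {m q : ℕ} (hq : q ∈ m.primeFactors) :
    1 ≤ m.factorization q := by
  obtain ⟨hp, hd, hm0⟩ := Nat.mem_primeFactors.mp hq
  exact hp.factorization_pos_of_dvd hm0 hd

lemma pow5_eq (m : ℕ) (hm : m ≠ 0) :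
    m^5 = ∏ q ∈ m.primeFactors, q ^ (5 * m.factorization q) := by
  conv_lhs => rw [← prod_pow_factorization m hm]
  rw [← Finset.prod_pow]
  exact Finset.prod_congr rfl fun q _ => by rw [← pow_mul, mul_comm]

lemma eps2_pow18 (m : ℕ) (hm : m ≠ 0) (hcop : Nat.Coprime m 6) :
    eps2 m ^ 18 * m ^ 5 ≤ dArith m ^ 18 := by
  rw [eps2, dArith, pow5_eq m hm, ← Finset.prod_pow, ← Finset.prod_pow,
    ← Finset.prod_mul_distrib]
  refine Finset.prod_le_prod' fun q hq => ?_
  refine termwise_small q _ _ (five_le_of_mem hq hcop) (factorization_pos_of_mem hq) ?_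
  split
  · omega
  · exact jacobi_factor_le _ _

lemma eps3_pow18 (m : ℕ) (hm : m ≠ 0) (hcop : Nat.Coprime m 6) :
    eps3 m ^ 18 * m ^ 5 ≤ dArith m ^ 18 := by
  rw [eps3, dArith, pow5_eq m hm, ← Finset.prod_pow, ← Finset.prod_pow,
    ← Finset.prod_mul_distrib]
  refine Finset.prod_le_prod' fun q hq => ?_
  refine termwise_small q _ _ (five_le_of_mem hq hcop) (factorization_pos_of_mem hq) ?_
  split
  · omega
  · split
    · omega
    · exact jacobi_factor_le _ _

lemma epsInf_pow18 (m : ℕ) (hm : m ≠ 0) (hcop : Nat.Coprime m 6) :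
    epsInf m ^ 18 * m ^ 5 ≤ dArith m ^ 18 := by
  rw [epsInf, dArith, pow5_eq m hm, ← Finset.prod_pow, ← Finset.prod_pow,
    ← Finset.prod_mul_distrib]
  refine Finset.prod_le_prod' fun q hq => ?_
  exact termwise_inf q _ (five_le_of_mem hq hcop) (factorization_pos_of_mem hq)

lemma dArith_prime_pow {p n : ℕ} (hp : p.Prime) (hn : n ≠ 0) :
    dArith (p^n) = p^(n-1) * (p+1) := by
  rw [dArith, Nat.primeFactors_prime_pow hn hp, Finset.prod_singleton,
    hp.factorization_pow, Finsupp.single_eq_same]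

lemma two_le_epsInf_prime_pow {p n : ℕ} (hp : p.Prime) (hn : n ≠ 0) :
    2 ≤ epsInf (p^n) := by
  rw [epsInf, Nat.primeFactors_prime_pow hn hp, Finset.prod_singleton,
    hp.factorization_pow, Finsupp.single_eq_same]
  have h2 := hp.two_le
  split
  · have h1 : 1 ≤ p ^ (n/2 - 1) := Nat.one_le_iff_ne_zero.mpr (pow_ne_zero _ (by omega))
    nlinarith
  · have h1 : 1 ≤ p ^ ((n-1)/2) := Nat.one_le_iff_ne_zero.mpr (pow_ne_zero _ (by omega))
    omega

end more

lemma log_eq_sum (N : ℕ) (hN : N ≠ 0) :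
    Real.log N = ∑ p ∈ N.primeFactors, (N.factorization p : ℝ) * Real.log p := by
  conv_lhs => rw [← prod_pow_factorization N hN]
  push_cast
  rw [Real.log_prod]
  · exact Finset.sum_congr rfl fun p _ => by rw [Real.log_pow]
  · intro p hp
    have := (Nat.prime_of_mem_primeFactors hp).two_le
    positivity

lemma sum_log_le (N : ℕ) (hN : N ≠ 0) :
    ∑ p ∈ N.primeFactors, Real.log p ≤ Real.log N := by
  rw [log_eq_sum N hN]
  refine Finset.sum_le_sum fun p hp => ?_
  have h1 : (1:ℝ) ≤ (N.factorization p : ℝ) := by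
    have : 1 ≤ N.factorization p := by
      obtain ⟨hpp, hd, hm0⟩ := Nat.mem_primeFactors.mp hp
      exact hpp.factorization_pos_of_dvd hm0 hd
    exact_mod_cast this
  have h2 : (0:ℝ) ≤ Real.log p :=
    Real.log_nonneg (by exact_mod_cast (Nat.prime_of_mem_primeFactors hp).one_lt.le)
  nlinarith

lemma sum_log_div_sub_one_le (N : ℕ) (hN : N ≠ 0) (T : ℝ) (hT : 1 ≤ T) :
    ∑ p ∈ N.primeFactors, Real.log p / ((p:ℝ) - 1)
      ≤ (T+2)^2 + Real.log N / T := by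
  classical
  have hsplit := Finset.sum_filter_add_sum_filter_not N.primeFactors
    (fun p : ℕ => (p:ℝ) ≤ T + 1) (fun p => Real.log p / ((p:ℝ) - 1))
  rw [← hsplit]
  have hb1 : ∑ p ∈ N.primeFactors.filter (fun p : ℕ => (p:ℝ) ≤ T + 1),
      Real.log p / ((p:ℝ) - 1) ≤ (T+2)^2 := by
    have hcard : (N.primeFactors.filter (fun p : ℕ => (p:ℝ) ≤ T + 1)).card ≤ ⌊T+1⌋₊ + 1 := by
      have hsub : N.primeFactors.filter (fun p : ℕ => (p:ℝ) ≤ T + 1) ⊆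
          Finset.range (⌊T+1⌋₊ + 1) := by
        intro p hp
        rw [Finset.mem_filter] at hp
        rw [Finset.mem_range]
        have := Nat.le_floor hp.2
        omega
      simpa using Finset.card_le_card hsub
    calc ∑ p ∈ N.primeFactors.filter (fun p : ℕ => (p:ℝ) ≤ T + 1),
          Real.log p / ((p:ℝ) - 1)
        ≤ ∑ _p ∈ N.primeFactors.filter (fun p : ℕ => (p:ℝ) ≤ T + 1), (T+1) := by
          refine Finset.sum_le_sum fun p hp => ?_
          rw [Finset.mem_filter] at hp
          have h2 : (2:ℕ) ≤ p := (Nat.prime_of_mem_primeFactors hp.1).two_le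
          have h2' : (2:ℝ) ≤ (p:ℝ) := by exact_mod_cast h2
          have hlogp : Real.log p ≤ T + 1 := by
            calc Real.log p ≤ (p:ℝ) - 1 := by
                  have := Real.add_one_le_exp (Real.log p)
                  rw [Real.exp_log (by linarith)] at this
                  linarith
              _ ≤ T + 1 - 1 := by linarith [hp.2]
              _ ≤ T + 1 := by linarith
          have hden : (1:ℝ) ≤ (p:ℝ) - 1 := by linarith
          have hlognn : 0 ≤ Real.log p := Real.log_nonneg (by linarith)
          calc Real.log p / ((p:ℝ) - 1) ≤ Real.log p / 1 := by
                exact div_le_div_of_nonneg_left hlognn (by norm_num) hden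
            _ = Real.log p := by ring
            _ ≤ T + 1 := hlogp
      _ = (N.primeFactors.filter (fun p : ℕ => (p:ℝ) ≤ T + 1)).card * (T+1) := by
          rw [Finset.sum_const, nsmul_eq_mul]
      _ ≤ (⌊T+1⌋₊ + 1 : ℕ) * (T+1) := by
          have : ((N.primeFactors.filter (fun p : ℕ => (p:ℝ) ≤ T + 1)).card : ℝ)
              ≤ ((⌊T+1⌋₊ + 1 : ℕ) : ℝ) := by exact_mod_cast hcard
          nlinarith
      _ ≤ (T+2) * (T+1) := by
          have : ((⌊T+1⌋₊ + 1 : ℕ) : ℝ) ≤ (T+1) + 1 := by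
            push_cast
            have := Nat.floor_le (by linarith : (0:ℝ) ≤ T + 1)
            linarith
          nlinarith
      _ ≤ (T+2)^2 := by nlinarith
  have hb2 : ∑ p ∈ N.primeFactors.filter (fun p : ℕ => ¬ (p:ℝ) ≤ T + 1),
      Real.log p / ((p:ℝ) - 1) ≤ Real.log N / T := by
    calc ∑ p ∈ N.primeFactors.filter (fun p : ℕ => ¬ (p:ℝ) ≤ T + 1),
          Real.log p / ((p:ℝ) - 1)
        ≤ ∑ p ∈ N.primeFactors.filter (fun p : ℕ => ¬ (p:ℝ) ≤ T + 1), Real.log p / T := by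
          refine Finset.sum_le_sum fun p hp => ?_
          rw [Finset.mem_filter] at hp
          have hgt : T + 1 < (p:ℝ) := by linarith [not_le.mp hp.2]
          have hlognn : 0 ≤ Real.log p := Real.log_nonneg (by linarith)
          exact div_le_div_of_nonneg_left hlognn (by linarith) (by linarith)
      _ = (∑ p ∈ N.primeFactors.filter (fun p : ℕ => ¬ (p:ℝ) ≤ T + 1), Real.log p) / T := by
          rw [Finset.sum_div]
      _ ≤ (∑ p ∈ N.primeFactors, Real.log p) / T := by
          refine div_le_div_of_nonneg_right ?_ (by linarith)
          refine Finset.sum_le_sum_of_subset_of_nonneg (Finset.filter_subset _ _)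
            fun p hp _ => Real.log_nonneg ?_
          exact_mod_cast (Nat.prime_of_mem_primeFactors hp).one_lt.le
      _ ≤ Real.log N / T := by
          exact div_le_div_of_nonneg_right (sum_log_le N hN) (by linarith)
  linarith

lemma rpow_fact {e D N : ℕ} (h : e^18 * N^5 ≤ D^18) :
    (e:ℝ) * (N:ℝ)^((5:ℝ)/18) ≤ (D:ℝ) := by
  have hA : (0:ℝ) ≤ (N:ℝ)^((5:ℝ)/18) := Real.rpow_nonneg (Nat.cast_nonneg N) _
  have h18 : ((e:ℝ) * (N:ℝ)^((5:ℝ)/18))^18 ≤ (D:ℝ)^18 := by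
    have hA18 : ((N:ℝ)^((5:ℝ)/18))^(18:ℕ) = (N:ℝ)^(5:ℕ) := by
      rw [← Real.rpow_natCast ((N:ℝ)^((5:ℝ)/18)) 18, ← Real.rpow_mul (Nat.cast_nonneg N),
        ← Real.rpow_natCast (N:ℝ) 5]
      norm_num
    rw [mul_pow, hA18]
    calc (e:ℝ)^18 * (N:ℝ)^(5:ℕ) = ((e^18 * N^5 : ℕ) : ℝ) := by push_cast; ring
      _ ≤ ((D^18 : ℕ) : ℝ) := by exact_mod_cast h
      _ = (D:ℝ)^18 := by push_cast; ring
  exact le_of_pow_le_pow_left₀ (by norm_num) (Nat.cast_nonneg D) h18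

lemma one_le_rpow {N : ℕ} (h : 1 ≤ N) : (1:ℝ) ≤ (N:ℝ)^((5:ℝ)/18) :=
  Real.one_le_rpow (by exact_mod_cast h) (by norm_num)

lemma rpow_le_self {N : ℕ} (h : 1 ≤ N) : (N:ℝ)^((5:ℝ)/18) ≤ (N:ℝ) := by
  calc (N:ℝ)^((5:ℝ)/18) ≤ (N:ℝ)^(1:ℝ) :=
    Real.rpow_le_rpow_of_exponent_le (by exact_mod_cast h) (by norm_num)
  _ = (N:ℝ) := Real.rpow_one _

lemma tendsto_log_div_rpow :
    Tendsto (fun N : ℕ => Real.log N / (N:ℝ)^((5:ℝ)/18)) atTop (nhds 0) :=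
  ((isLittleO_log_rpow_atTop (by norm_num : (0:ℝ) < 5/18)).tendsto_div_nhds_zero).comp
    tendsto_natCast_atTop_atTop

lemma tendsto_rpow_n : Tendsto (fun N : ℕ => (N:ℝ)^((5:ℝ)/18)) atTop atTop :=
  (tendsto_rpow_atTop (by norm_num : (0:ℝ) < 5/18)).comp tendsto_natCast_atTop_atTop

lemma tendsto_log_n : Tendsto (fun N : ℕ => Real.log N) atTop atTop :=
  Real.tendsto_log_atTop.comp tendsto_natCast_atTop_atTop

section PER
variable {D A P nn X dM e2 e3 eI e2M e3M eIM ξ δ s : ℝ}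

lemma bd5 (hA : 1 ≤ A) (hA0 : 0 ≤ A) (hD0 : 0 ≤ D) (hP1 : (0:ℝ) ≤ P - 1)
    (hnn : 1 ≤ nn) (hAD : A ≤ D) (hPD : P ≤ D)
    (h9 : e2 * A ≤ D) (h10 : e3 * A ≤ D) (h14 : e3M ≤ dM) (hdMD : dM * (P+1) ≤ D)
    (he2 : 0 ≤ e2) (he3 : 0 ≤ e3) (he3M : 0 ≤ e3M)
    (hξ : 0 ≤ ξ) (hξ1 : ξ ≤ 1) (hδ : 0 ≤ δ) (hδ1 : δ ≤ 1)
    (hs : -1 ≤ s) (hs1 : s ≤ 1) :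
    |(3*(e2 + 2*e3 - 4)*nn - 2*e3 + 2*(1+s)*(ξ*e3M - 9*δ))*D*(P-1)| * A
      ≤ 23*(nn*(P-1))*D^2 + 40*D^2*A := by
  have hy : |3*(e2 + 2*e3 - 4)*nn - 2*e3 + 2*(1+s)*(ξ*e3M - 9*δ)|
      ≤ 3*nn*e2 + 6*nn*e3 + 12*nn + 2*e3 + 4*e3M + 36 := by
    have hs2 : (1+s)*ξ ≤ 2 := by nlinarith
    have hs0 : 0 ≤ (1+s)*ξ := by nlinarith
    have hup : (1+s)*(ξ*e3M) ≤ 2*e3M := by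
      nlinarith [mul_le_mul_of_nonneg_right hs2 he3M]
    have hlo : 0 ≤ (1+s)*(ξ*e3M) := by nlinarith [mul_nonneg hs0 he3M]
    have hd2 : (1+s)*(9*δ) ≤ 18 := by nlinarith
    have hd0 : 0 ≤ (1+s)*(9*δ) := by nlinarith
    refine abs_le.mpr ⟨by nlinarith [mul_nonneg (mul_nonneg (by norm_num : (0:ℝ)≤3) (by nlinarith : (0:ℝ) ≤ e2 + 2*e3)) (by linarith : (0:ℝ) ≤ nn - 1)], by nlinarith [mul_nonneg (mul_nonneg (by norm_num : (0:ℝ)≤3) (by nlinarith : (0:ℝ) ≤ e2 + 2*e3)) (by linarith : (0:ℝ) ≤ nn - 1)]⟩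
  have hDPA : (0:ℝ) ≤ D*(P-1)*A := mul_nonneg (mul_nonneg hD0 hP1) hA0
  have c1 : 3*nn*e2*(D*(P-1)*A) ≤ 3*(nn*(P-1))*D^2 := by
    nlinarith [mul_le_mul_of_nonneg_left h9 (mul_nonneg (mul_nonneg (by norm_num : (0:ℝ)≤3) (by linarith : (0:ℝ) ≤ nn)) (mul_nonneg hP1 hD0))]
  have c2 : 6*nn*e3*(D*(P-1)*A) ≤ 6*(nn*(P-1))*D^2 := by
    nlinarith [mul_le_mul_of_nonneg_left h10 (mul_nonneg (mul_nonneg (by norm_num : (0:ℝ)≤6) (by linarith : (0:ℝ) ≤ nn)) (mul_nonneg hP1 hD0))]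
  have c3 : 12*nn*(D*(P-1)*A) ≤ 12*(nn*(P-1))*D^2 := by
    nlinarith [mul_le_mul_of_nonneg_left hAD (mul_nonneg (mul_nonneg (by norm_num : (0:ℝ)≤12) (by linarith : (0:ℝ) ≤ nn)) (mul_nonneg hP1 hD0))]
  have c4 : 2*e3*(D*(P-1)*A) ≤ 2*(nn*(P-1))*D^2 := by
    nlinarith [mul_le_mul_of_nonneg_left h10 (mul_nonneg (mul_nonneg (by norm_num : (0:ℝ)≤2) hD0) hP1), mul_nonneg (mul_nonneg (mul_nonneg (by linarith : (0:ℝ) ≤ nn - 1) hP1) (sq_nonneg D)) hA0]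
  have he3MP : e3M*(P-1) ≤ D := by
    nlinarith [mul_le_mul_of_nonneg_right h14 hP1]
  have c5 : 4*e3M*(D*(P-1)*A) ≤ 4*D^2*A := by
    nlinarith [mul_le_mul_of_nonneg_left he3MP (mul_nonneg (mul_nonneg (by norm_num : (0:ℝ)≤4) hD0) hA0)]
  have c6 : 36*(D*(P-1)*A) ≤ 36*D^2*A := by
    nlinarith [mul_le_mul_of_nonneg_left hPD (mul_nonneg (mul_nonneg (by norm_num : (0:ℝ)≤36) hD0) hA0)]
  have e : |(3*(e2 + 2*e3 - 4)*nn - 2*e3 + 2*(1+s)*(ξ*e3M - 9*δ))*D*(P-1)|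
      = |3*(e2 + 2*e3 - 4)*nn - 2*e3 + 2*(1+s)*(ξ*e3M - 9*δ)| * (D*(P-1)) := by
    rw [abs_mul, abs_mul, abs_of_nonneg hD0, abs_of_nonneg hP1, mul_assoc]
  rw [e]
  have step : |3*(e2 + 2*e3 - 4)*nn - 2*e3 + 2*(1+s)*(ξ*e3M - 9*δ)| * (D*(P-1)) * A
      ≤ (3*nn*e2 + 6*nn*e3 + 12*nn + 2*e3 + 4*e3M + 36) * (D*(P-1)*A) := by
    rw [mul_assoc]
    exact mul_le_mul_of_nonneg_right hy hDPA
  refine step.trans ?_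
  linarith [c1, c2, c3, c4, c5, c6]

lemma bd8 (hA0 : 0 ≤ A) (hD : 1 ≤ D) (hD0 : 0 ≤ D)
    (hnP4 : 4 ≤ nn*(P-1)) (h11 : eI * A ≤ D) (hE2 : e2 ≤ D) (hE3 : e3 ≤ D)
    (he2 : 0 ≤ e2) (he3 : 0 ≤ e3) (heI : 0 ≤ eI) :
    |12*(nn*(P-1)+2)*(3*e2+4*e3-12)*eI| * A ≤ 456*(nn*(P-1))*D^2 := by
  have hY : |3*e2+4*e3-12| ≤ 19*D := abs_le.mpr ⟨by linarith, by linarith⟩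
  rw [abs_mul, abs_mul, abs_of_nonneg (by nlinarith : (0:ℝ) ≤ 12*(nn*(P-1)+2)),
    abs_of_nonneg heI]
  have hmul : |3*e2+4*e3-12| * (eI*A) ≤ 19*D*D := by
    calc |3*e2+4*e3-12| * (eI*A) ≤ (19*D) * (eI*A) :=
          mul_le_mul_of_nonneg_right hY (mul_nonneg heI hA0)
      _ ≤ 19*D*D := by nlinarith [mul_le_mul_of_nonneg_left h11 (by positivity : (0:ℝ) ≤ 19*D)]
  have h1 : 12*(nn*(P-1)+2)*(|3*e2+4*e3-12| * (eI*A)) ≤ 12*(nn*(P-1)+2)*(19*D*D) :=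
    mul_le_mul_of_nonneg_left hmul (by nlinarith)
  have h2 : 12*(nn*(P-1)+2)*(19*D*D) ≤ 456*(nn*(P-1))*D^2 := by
    nlinarith [mul_nonneg (by linarith : (0:ℝ) ≤ nn*(P-1) - 2) (sq_nonneg D)]
  calc 12*(nn*(P-1)+2)* |3*e2+4*e3-12| *eI * A
      = 12*(nn*(P-1)+2)*(|3*e2+4*e3-12| * (eI*A)) := by ring
    _ ≤ 12*(nn*(P-1)+2)*(19*D*D) := h1
    _ ≤ 456*(nn*(P-1))*D^2 := h2

lemma bd9 (hA0 : 0 ≤ A) (hD : 1 ≤ D) (hD0 : 0 ≤ D) (hdM : 1 ≤ dM)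
    (hnP4 : 4 ≤ nn*(P-1)) (h9 : e2 * A ≤ D) (h10 : e3 * A ≤ D)
    (h13 : e2M ≤ dM) (h14 : e3M ≤ dM) (hdMD' : dM ≤ D) (hE3 : e3 ≤ D)
    (he2 : 0 ≤ e2) (he3 : 0 ≤ e3) (he2M : 0 ≤ e2M) (he3M : 0 ≤ e3M) :
    |2*(nn*(P-1)+2)*(9*e2*(e2M-4) + 16*e3*(e3M-3) + 12*e2*e3)| * A
      ≤ 484*(nn*(P-1))*D^2 := by
  have habsZ : |9*e2*(e2M-4) + 16*e3*(e3M-3) + 12*e2*e3|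
      ≤ 9*e2*(e2M+4) + 16*e3*(e3M+3) + 12*e2*e3 := by
    refine abs_le.mpr ⟨?_, ?_⟩
    · nlinarith [mul_nonneg he2 he2M, mul_nonneg he3 he3M, mul_nonneg he2 he3]
    · nlinarith [mul_nonneg he2 he2M, mul_nonneg he3 he3M, mul_nonneg he2 he3]
  have z1 : 9*e2*(e2M+4)*A ≤ 45*D^2 := by
    have h5 : e2M + 4 ≤ 5*D := by linarith
    nlinarith [mul_le_mul h9 h5 (by linarith) hD0]
  have z2 : 16*e3*(e3M+3)*A ≤ 64*D^2 := by
    have h4 : e3M + 3 ≤ 4*D := by linarith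
    nlinarith [mul_le_mul h10 h4 (by linarith) hD0]
  have z3 : 12*e2*e3*A ≤ 12*D^2 := by
    nlinarith [mul_le_mul h9 hE3 he3 hD0]
  have hZ : |9*e2*(e2M-4) + 16*e3*(e3M-3) + 12*e2*e3| * A ≤ 121*D^2 := by
    have := mul_le_mul_of_nonneg_right habsZ hA0
    nlinarith [this]
  have h1 : 2*(nn*(P-1)+2)*(|9*e2*(e2M-4) + 16*e3*(e3M-3) + 12*e2*e3| * A)
      ≤ 2*(nn*(P-1)+2)*(121*D^2) :=
    mul_le_mul_of_nonneg_left hZ (by nlinarith)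
  have h2 : 2*(nn*(P-1)+2)*(121*D^2) ≤ 484*(nn*(P-1))*D^2 := by
    nlinarith [mul_nonneg (by linarith : (0:ℝ) ≤ nn*(P-1) - 2) (sq_nonneg D)]
  calc |2*(nn*(P-1)+2)*(9*e2*(e2M-4) + 16*e3*(e3M-3) + 12*e2*e3)| * A
      = 2*(nn*(P-1)+2)*(|9*e2*(e2M-4) + 16*e3*(e3M-3) + 12*e2*e3| * A) := by
        rw [abs_mul, abs_of_nonneg (by nlinarith : (0:ℝ) ≤ 2*(nn*(P-1)+2))]
        ring
    _ ≤ 2*(nn*(P-1)+2)*(121*D^2) := h1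
    _ ≤ 484*(nn*(P-1))*D^2 := h2

end PER

set_option maxHeartbeats 2000000 in
lemma key_ineq (D A P nn X dM e2 e3 eI e2M e3M eIM ξ δ s : ℝ)
    (hD : 1 ≤ D) (hA : 1 ≤ A) (hAD : A ≤ D) (hP : 5 ≤ P) (hnn : 1 ≤ nn)
    (hX : 1 ≤ X) (hdM : 1 ≤ dM) (h8 : D = X * (P+1) * dM)
    (h9 : e2 * A ≤ D) (h10 : e3 * A ≤ D) (h11 : eI * A ≤ D)
    (h12 : 2 * (eIM * A) ≤ D)
    (h13 : e2M ≤ dM) (h14 : e3M ≤ dM) (h15 : eIM ≤ dM)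
    (he2 : 0 ≤ e2) (he3 : 0 ≤ e3) (heI : 0 ≤ eI)
    (he2M : 0 ≤ e2M) (he3M : 0 ≤ e3M) (heIM : 0 ≤ eIM)
    (hξ : 0 ≤ ξ) (hξ1 : ξ ≤ 1) (hδ : 0 ≤ δ) (hδ1 : δ ≤ 1)
    (hs : -1 ≤ s) (hs1 : s ≤ 1) (hPD : P ≤ D) :
    |2*D^2 - 8*D*dM*(X - 1) - 6*(nn*(P-1) - 4)*D*eI - 96*D*eIM
      - (3*(e2 + 2*e3 - 4)*nn - 2*e3 + 2*(1+s)*(ξ*e3M - 9*δ))*D*(P-1)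
      + 4*(12 - 3*e2 - 4*e3)*D + 144*(X*(P+1))*eIM^2
      + 12*(nn*(P-1)+2)*(3*e2+4*e3-12)*eI
      + 2*(nn*(P-1)+2)*(9*e2*(e2M-4) + 16*e3*(e3M-3) + 12*e2*e3)| * A
    ≤ 1000 * D^2 * (A + nn*(P-1)) := by
  have hA0 : (0:ℝ) ≤ A := by linarith
  have hD0 : (0:ℝ) ≤ D := by linarith
  have hP1 : (0:ℝ) ≤ P - 1 := by linarith
  have hE2 : e2 ≤ D := by nlinarith [mul_le_mul_of_nonneg_left hA he2]
  have hE3 : e3 ≤ D := by nlinarith [mul_le_mul_of_nonneg_left hA he3]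
  have hEI : eI ≤ D := by nlinarith [mul_le_mul_of_nonneg_left hA heI]
  have hdMD : dM * (P+1) ≤ D := by
    nlinarith [mul_nonneg (sub_nonneg.mpr hX) (mul_nonneg (by linarith : (0:ℝ) ≤ P+1) (by linarith : (0:ℝ) ≤ dM))]
  have hdMD' : dM ≤ D := by nlinarith
  have hnP4 : 4 ≤ nn*(P-1) := by nlinarith
  have hnP0 : (0:ℝ) ≤ nn*(P-1) := by linarith
  have b1 : |2*D^2| * A ≤ 2*D^2*A := by
    rw [abs_of_nonneg (by positivity)]
  have hx2 : 4*(dM*(X-1)) ≤ D := by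
    nlinarith [mul_nonneg (by linarith : (0:ℝ) ≤ dM) (mul_nonneg (by linarith : (0:ℝ) ≤ X) (by linarith : (0:ℝ) ≤ P-3))]
  have b2 : |8*D*dM*(X - 1)| * A ≤ 2*D^2*A := by
    rw [abs_of_nonneg (mul_nonneg (mul_nonneg (mul_nonneg (by norm_num : (0:ℝ)≤(8:ℝ)) hD0) (by linarith : (0:ℝ)≤dM)) (by linarith : (0:ℝ)≤X-1))]
    nlinarith [mul_le_mul_of_nonneg_left hx2 (mul_nonneg (mul_nonneg (by norm_num : (0:ℝ)≤(2:ℝ)) hD0) hA0)]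
  have b3 : |6*(nn*(P-1) - 4)*D*eI| * A ≤ 6*D^2*(nn*(P-1)) := by
    rw [abs_of_nonneg (mul_nonneg (mul_nonneg (by nlinarith : (0:ℝ) ≤ 6*(nn*(P-1)-4)) hD0) heI)]
    nlinarith [mul_le_mul_of_nonneg_left h11 (mul_nonneg (by nlinarith : (0:ℝ) ≤ 6*(nn*(P-1)-4)) hD0), sq_nonneg D, mul_le_mul_of_nonneg_left h11 (by norm_num : (0:ℝ) ≤ 24)]
  have b4 : |96*D*eIM| * A ≤ 48*D^2*A := by
    rw [abs_of_nonneg (by positivity)]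
    nlinarith [mul_le_mul_of_nonneg_left h12 (mul_nonneg (by norm_num : (0:ℝ) ≤ 48) hD0), mul_nonneg hD0 hA0]
  have b5 := bd5 hA hA0 hD0 hP1 hnn hAD hPD h9 h10 h14 hdMD he2 he3 he3M hξ hξ1 hδ hδ1 hs hs1
  have b6 : |4*(12 - 3*e2 - 4*e3)*D| * A ≤ 76*D^2*A := by
    have hy6 : |12 - 3*e2 - 4*e3| ≤ 12 + 3*e2 + 4*e3 := abs_le.mpr ⟨by linarith, by linarith⟩
    rw [abs_mul, abs_mul, abs_of_nonneg (by norm_num : (0:ℝ) ≤ 4), abs_of_nonneg hD0]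
    have step : 4 * |12 - 3*e2 - 4*e3| * D * A ≤ 4*(12 + 3*e2 + 4*e3)*D*A := by
      have := mul_le_mul_of_nonneg_right hy6
        (mul_nonneg (mul_nonneg (by norm_num : (0:ℝ)≤4) hD0) hA0)
      nlinarith [this]
    refine step.trans ?_
    nlinarith [mul_le_mul_of_nonneg_left h9 (mul_nonneg (by norm_num : (0:ℝ)≤12) hD0),
      mul_le_mul_of_nonneg_left h10 (mul_nonneg (by norm_num : (0:ℝ)≤16) hD0),
      mul_nonneg (mul_nonneg (mul_nonneg (by norm_num : (0:ℝ)≤48) (sub_nonneg.mpr hD)) hD0) hA0,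
      mul_nonneg (mul_nonneg (by norm_num : (0:ℝ)≤28) (sub_nonneg.mpr hA)) (sq_nonneg D)]
  have s1 : X*(P+1)*eIM ≤ D := by
    nlinarith [mul_le_mul_of_nonneg_left h15
      (mul_nonneg (by linarith : (0:ℝ) ≤ X) (by linarith : (0:ℝ) ≤ P+1))]
  have b7 : |144*(X*(P+1))*eIM^2| * A ≤ 72*D^2*A := by
    rw [abs_of_nonneg (by positivity)]
    have h72 := mul_le_mul s1 h12 (by positivity) hD0
    nlinarith [h72, mul_nonneg (mul_nonneg (by norm_num : (0:ℝ)≤72) (sub_nonneg.mpr hA)) (sq_nonneg D)]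
  have b8 := bd8 hA0 hD hD0 hnP4 h11 hE2 hE3 he2 he3 heI
  have b9 := bd9 hA0 hD hD0 hdM hnP4 h9 h10 h13 h14 hdMD' hE3 he2 he3 he2M he3M
  have tri : |2*D^2 - 8*D*dM*(X - 1) - 6*(nn*(P-1) - 4)*D*eI - 96*D*eIM
      - (3*(e2 + 2*e3 - 4)*nn - 2*e3 + 2*(1+s)*(ξ*e3M - 9*δ))*D*(P-1)
      + 4*(12 - 3*e2 - 4*e3)*D + 144*(X*(P+1))*eIM^2
      + 12*(nn*(P-1)+2)*(3*e2+4*e3-12)*eI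
      + 2*(nn*(P-1)+2)*(9*e2*(e2M-4) + 16*e3*(e3M-3) + 12*e2*e3)|
      ≤ |2*D^2| + |8*D*dM*(X - 1)| + |6*(nn*(P-1) - 4)*D*eI| + |96*D*eIM|
      + |(3*(e2 + 2*e3 - 4)*nn - 2*e3 + 2*(1+s)*(ξ*e3M - 9*δ))*D*(P-1)|
      + |4*(12 - 3*e2 - 4*e3)*D| + |144*(X*(P+1))*eIM^2|
      + |12*(nn*(P-1)+2)*(3*e2+4*e3-12)*eI|
      + |2*(nn*(P-1)+2)*(9*e2*(e2M-4) + 16*e3*(e3M-3) + 12*e2*e3)| := by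
    have l1 := le_abs_self (2*D^2)
    have m1 := neg_abs_le (2*D^2)
    have l2 := le_abs_self (8*D*dM*(X - 1))
    have m2 := neg_abs_le (8*D*dM*(X - 1))
    have l3 := le_abs_self (6*(nn*(P-1) - 4)*D*eI)
    have m3 := neg_abs_le (6*(nn*(P-1) - 4)*D*eI)
    have l4 := le_abs_self (96*D*eIM)
    have m4 := neg_abs_le (96*D*eIM)
    have l5 := le_abs_self ((3*(e2 + 2*e3 - 4)*nn - 2*e3 + 2*(1+s)*(ξ*e3M - 9*δ))*D*(P-1))
    have m5 := neg_abs_le ((3*(e2 + 2*e3 - 4)*nn - 2*e3 + 2*(1+s)*(ξ*e3M - 9*δ))*D*(P-1))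
    have l6 := le_abs_self (4*(12 - 3*e2 - 4*e3)*D)
    have m6 := neg_abs_le (4*(12 - 3*e2 - 4*e3)*D)
    have l7 := le_abs_self (144*(X*(P+1))*eIM^2)
    have m7 := neg_abs_le (144*(X*(P+1))*eIM^2)
    have l8 := le_abs_self (12*(nn*(P-1)+2)*(3*e2+4*e3-12)*eI)
    have m8 := neg_abs_le (12*(nn*(P-1)+2)*(3*e2+4*e3-12)*eI)
    have l9 := le_abs_self (2*(nn*(P-1)+2)*(9*e2*(e2M-4) + 16*e3*(e3M-3) + 12*e2*e3))
    have m9 := neg_abs_le (2*(nn*(P-1)+2)*(9*e2*(e2M-4) + 16*e3*(e3M-3) + 12*e2*e3))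
    refine abs_le.mpr ⟨by linarith, by linarith⟩
  have final := mul_le_mul_of_nonneg_right tri hA0
  have hDA : (0:ℝ) ≤ D^2*A := mul_nonneg (sq_nonneg D) hA0
  have hDu : (0:ℝ) ≤ D^2*(nn*(P-1)) := mul_nonneg (sq_nonneg D) hnP0
  linarith [final, b1, b2, b3, b4, b5, b6, b7, b8, b9, hDA, hDu]

lemma cast_fCorr (p n M : ℕ) :
    ((fCorr p n M : ℚ) : ℝ) =
      2*(dArith (p^n*M) : ℝ)^2
      - 8*(dArith (p^n*M) : ℝ)*(dArith M : ℝ)*((p:ℝ)^(n-1) - 1)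
      - 6*((n:ℝ)*((p:ℝ)-1) - 4)*(dArith (p^n*M) : ℝ)*(epsInf (p^n*M) : ℝ)
      - 96*(dArith (p^n*M) : ℝ)*(epsInf M : ℝ)
      - (3*((eps2 (p^n*M) : ℝ) + 2*(eps3 (p^n*M) : ℝ) - 4)*(n:ℝ) - 2*(eps3 (p^n*M) : ℝ)
          + 2*(1+(-1:ℝ)^n)*((if p % 3 = 1 then (0:ℝ) else 1)*(eps3 M : ℝ)
            - 9*(if M = 1 then (1:ℝ) else 0)))*(dArith (p^n*M) : ℝ)*((p:ℝ)-1)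
      + 4*(12 - 3*(eps2 (p^n*M) : ℝ) - 4*(eps3 (p^n*M) : ℝ))*(dArith (p^n*M) : ℝ)
      + 144*(dArith (p^n) : ℝ)*(epsInf M : ℝ)^2
      + 12*((n:ℝ)*((p:ℝ)-1)+2)*(3*(eps2 (p^n*M) : ℝ)+4*(eps3 (p^n*M) : ℝ)-12)*(epsInf (p^n*M) : ℝ)
      + 2*((n:ℝ)*((p:ℝ)-1)+2)*(9*(eps2 (p^n*M) : ℝ)*((eps2 M : ℝ)-4)
          + 16*(eps3 (p^n*M) : ℝ)*((eps3 M : ℝ)-3)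
          + 12*(eps2 (p^n*M) : ℝ)*(eps3 (p^n*M) : ℝ)) := by
  simp only [fCorr]
  push_cast [apply_ite ((↑) : ℚ → ℝ)]
  ring


lemma eps2_rA {N : ℕ} (hN : N ≠ 0) (h : N.Coprime 6) :
    (eps2 N : ℝ) * (N:ℝ)^((5:ℝ)/18) ≤ (dArith N : ℝ) :=
  rpow_fact (eps2_pow18 N hN h)
lemma eps3_rA {N : ℕ} (hN : N ≠ 0) (h : N.Coprime 6) :
    (eps3 N : ℝ) * (N:ℝ)^((5:ℝ)/18) ≤ (dArith N : ℝ) :=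
  rpow_fact (eps3_pow18 N hN h)
lemma epsInf_rA {N : ℕ} (hN : N ≠ 0) (h : N.Coprime 6) :
    (epsInf N : ℝ) * (N:ℝ)^((5:ℝ)/18) ≤ (dArith N : ℝ) :=
  rpow_fact (epsInf_pow18 N hN h)

lemma per_prime {N p : ℕ} (hN1 : 1 < N) (hcop : N.Coprime 6) (hp : p ∈ N.primeFactors) :
    |((fCorr p (N.factorization p) (N / p ^ N.factorization p) : ℚ) : ℝ)| * (N:ℝ)^((5:ℝ)/18)
      ≤ 1000 * (dArith N : ℝ)^2 *
        ((N:ℝ)^((5:ℝ)/18) + (N.factorization p : ℝ)*((p:ℝ)-1)) := by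
  have hpp := Nat.prime_of_mem_primeFactors hp
  have hN0 : N ≠ 0 := by omega
  set n := N.factorization p with hn
  set M := N / p^n with hM
  have hn1 : 1 ≤ n := factorization_pos_of_mem hp
  have hn0 : n ≠ 0 := by omega
  have hNfac : p^n * M = N := Nat.ordProj_mul_ordCompl_eq_self N p
  have hpn0 : p^n ≠ 0 := pow_ne_zero _ hpp.pos.ne'
  have hM0 : M ≠ 0 := by
    intro h
    rw [h, mul_zero] at hNfac
    exact hN0 hNfac.symm
  have hcoppM : (p^n).Coprime M := Nat.Coprime.pow_left _ (Nat.coprime_ordCompl hpp hN0)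
  have hp5 : 5 ≤ p := five_le_of_mem hp hcop
  have hdpn : (dArith (p^n) : ℝ) = (p:ℝ)^(n-1)*((p:ℝ)+1) := by
    rw [dArith_prime_pow hpp hn0]
    push_cast
    ring
  rw [cast_fCorr p n M, hdpn, hNfac]
  have hD : (1:ℝ) ≤ (dArith N : ℝ) := by exact_mod_cast Nat.one_le_iff_ne_zero.mpr (dArith_pos N).ne'
  have hA : (1:ℝ) ≤ (N:ℝ)^((5:ℝ)/18) := one_le_rpow (by omega)
  have hAD : (N:ℝ)^((5:ℝ)/18) ≤ (dArith N : ℝ) :=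
    (rpow_le_self (by omega)).trans (by exact_mod_cast le_dArith N hN0)
  have hA0 : (0:ℝ) ≤ (N:ℝ)^((5:ℝ)/18) := by linarith
  have hPr : (5:ℝ) ≤ (p:ℝ) := by exact_mod_cast hp5
  have hnr : (1:ℝ) ≤ (n:ℝ) := by exact_mod_cast hn1
  have hX : (1:ℝ) ≤ (p:ℝ)^(n-1) := one_le_pow₀ (by linarith)
  have hdM : (1:ℝ) ≤ (dArith M : ℝ) := by
    exact_mod_cast Nat.one_le_iff_ne_zero.mpr (dArith_pos M).ne'
  have h8 : (dArith N : ℝ) = (p:ℝ)^(n-1)*((p:ℝ)+1)*(dArith M : ℝ) := by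
    rw [← hNfac, dArith_mul hpn0 hM0 hcoppM, dArith_prime_pow hpp hn0]
    push_cast
    ring
  have h9 : (eps2 N : ℝ) * (N:ℝ)^((5:ℝ)/18) ≤ (dArith N : ℝ) :=
    rpow_fact (eps2_pow18 N hN0 hcop)
  have h10 : (eps3 N : ℝ) * (N:ℝ)^((5:ℝ)/18) ≤ (dArith N : ℝ) :=
    rpow_fact (eps3_pow18 N hN0 hcop)
  have h11 : (epsInf N : ℝ) * (N:ℝ)^((5:ℝ)/18) ≤ (dArith N : ℝ) :=
    rpow_fact (epsInf_pow18 N hN0 hcop)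
  have h12 : 2 * ((epsInf M : ℝ) * (N:ℝ)^((5:ℝ)/18)) ≤ (dArith N : ℝ) := by
    have hnat : 2 * epsInf M ≤ epsInf N := by
      rw [← hNfac, epsInf_mul hpn0 hM0 hcoppM]
      exact Nat.mul_le_mul_right _ (two_le_epsInf_prime_pow hpp hn0)
    have t1 : ((2 * epsInf M : ℕ):ℝ) * (N:ℝ)^((5:ℝ)/18)
        ≤ (epsInf N : ℝ) * (N:ℝ)^((5:ℝ)/18) :=
      mul_le_mul_of_nonneg_right (by exact_mod_cast hnat) hA0
    push_cast at t1
    linarith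
  have h13 : (eps2 M : ℝ) ≤ (dArith M : ℝ) := by exact_mod_cast eps2_le_dArith M
  have h14 : (eps3 M : ℝ) ≤ (dArith M : ℝ) := by exact_mod_cast eps3_le_dArith M
  have h15 : (epsInf M : ℝ) ≤ (dArith M : ℝ) := by exact_mod_cast epsInf_le_dArith M
  have hPD : (p:ℝ) ≤ (dArith N : ℝ) := by
    have h1 : p ≤ N := Nat.le_of_dvd (by omega) (Nat.dvd_of_mem_primeFactors hp)
    exact_mod_cast h1.trans (le_dArith N hN0)
  have hs : -1 ≤ (-1:ℝ)^n ∧ (-1:ℝ)^n ≤ 1 := by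
    rcases Nat.even_or_odd n with h | h
    · rw [h.neg_one_pow]
      norm_num
    · rw [h.neg_one_pow]
      norm_num
  exact key_ineq _ _ _ _ _ _ _ _ _ _ _ _ _ _ _ hD hA hAD hPr hnr hX hdM h8 h9 h10 h11 h12
    h13 h14 h15 (Nat.cast_nonneg _) (Nat.cast_nonneg _) (Nat.cast_nonneg _)
    (Nat.cast_nonneg _) (Nat.cast_nonneg _) (Nat.cast_nonneg _)
    (by split <;> norm_num) (by split <;> norm_num) (by split <;> norm_num)
    (by split <;> norm_num) hs.1 hs.2 hPD

lemma summand_bound (F a w D P u : ℝ) (hF : 0 ≤ F) (ha : 1 ≤ a) (hw : 0 ≤ w)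
    (hD : 1 ≤ D) (hP : 5 ≤ P) (hu : 1 ≤ u)
    (hkey : F * a ≤ 1000*D^2*(a + u*(P-1))) :
    F*w/(12*D*(P-1)) ≤ 84*D*(w/(P-1)) + 84*D*(u*w)/a := by
  have ha0 : (0:ℝ) < a := by linarith
  have hP0 : (0:ℝ) < P - 1 := by linarith
  have hD0 : (0:ℝ) < D := by linarith
  rw [div_le_iff₀ (by positivity : (0:ℝ) < 12*D*(P-1)), ← mul_le_mul_iff_of_pos_right ha0]
  have e : ((84*D*(w/(P-1)) + 84*D*(u*w)/a) * (12*D*(P-1)))*a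
      = 1008*D^2*(w*a) + 1008*D^2*((u*w)*(P-1)) := by
    field_simp
    ring
  rw [e]
  nlinarith [mul_le_mul_of_nonneg_right hkey hw,
    mul_nonneg (mul_nonneg (sq_nonneg D) hw) (by linarith : (0:ℝ) ≤ a),
    mul_nonneg (mul_nonneg (mul_nonneg (sq_nonneg D) (by linarith : (0:ℝ) ≤ u)) hw) (by linarith : (0:ℝ) ≤ P-1)]

set_option maxHeartbeats 1000000 in
theorem stmt_9 :
    Tendsto (fun N : ℕ =>
      (∑ p ∈ N.primeFactors,
        ((fCorr p (N.factorization p) (N / p ^ N.factorization p) : ℚ) : ℝ) * Real.log p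
          / (12 * (dArith N : ℝ) * ((p : ℝ) - 1)))
      / ((genusX0 N : ℝ) * Real.log N))
      (atTop ⊓ 𝓟 {N : ℕ | 1 < N ∧ Nat.Coprime N 6}) (nhds 0) := by
  rw [NormedAddCommGroup.tendsto_nhds_zero]
  intro ε hε
  set T : ℝ := max 1 (3276/ε) with hT
  have hT1 : (1:ℝ) ≤ T := le_max_left _ _
  have hT0 : (0:ℝ) < T := by linarith
  have hTe : 1092 / T ≤ ε/3 := by
    have h1 : 3276/ε ≤ T := le_max_right _ _
    have h2 : 1092 / T ≤ 1092 / (3276/ε) :=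
      div_le_div_of_nonneg_left (by norm_num) (by positivity) h1
    have h3 : 1092 / (3276/ε) = ε/3 := by
      field_simp
      ring
    linarith
  rw [eventually_inf_principal]
  have E3 : ∀ᶠ N : ℕ in atTop, (169:ℝ) ≤ (N:ℝ)^((5:ℝ)/18) :=
    tendsto_rpow_n.eventually_ge_atTop 169
  have E2 : ∀ᶠ N : ℕ in atTop, 1092/(N:ℝ)^((5:ℝ)/18) < ε/3 :=
    (Tendsto.div_atTop tendsto_const_nhds tendsto_rpow_n).eventually_lt_const
      (by positivity : (0:ℝ) < ε/3)
  have E1 : ∀ᶠ N : ℕ in atTop, 1092*(T+2)^2/Real.log N < ε/3 :=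
    (Tendsto.div_atTop tendsto_const_nhds tendsto_log_n).eventually_lt_const
      (by positivity : (0:ℝ) < ε/3)
  have E4 : ∀ᶠ N : ℕ in atTop, 2 ≤ N := eventually_ge_atTop 2
  filter_upwards [E1, E2, E3, E4] with N h1 h2 h3 h4 hmem
  obtain ⟨hN1, hcop⟩ := hmem
  have hN0 : N ≠ 0 := by omega
  have hD1 : (1:ℝ) ≤ (dArith N : ℝ) := by
    exact_mod_cast Nat.one_le_iff_ne_zero.mpr (dArith_pos N).ne'
  have hA1 : (1:ℝ) ≤ (N:ℝ)^((5:ℝ)/18) := one_le_rpow (by omega)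
  have hL0 : (0:ℝ) < Real.log N := Real.log_pos (by exact_mod_cast hN1)
  -- genus lower bound
  have hg : (dArith N : ℝ)/13 ≤ ((genusX0 N : ℚ) : ℝ) := by
    have e2b := eps2_rA hN0 hcop
    have e3b := eps3_rA hN0 hcop
    have eIb := epsInf_rA hN0 hcop
    have hge : ((genusX0 N : ℚ) : ℝ) = 1 + (dArith N : ℝ)/12 - (eps2 N : ℝ)/4
        - (eps3 N : ℝ)/3 - (epsInf N : ℝ)/2 := by
      simp only [genusX0]
      push_cast
      ring
    rw [hge]
    have c2 : (eps2 N : ℝ) * 169 ≤ (dArith N : ℝ) := by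
      nlinarith [mul_le_mul_of_nonneg_left h3 (Nat.cast_nonneg (eps2 N))]
    have c3 : (eps3 N : ℝ) * 169 ≤ (dArith N : ℝ) := by
      nlinarith [mul_le_mul_of_nonneg_left h3 (Nat.cast_nonneg (eps3 N))]
    have cI : (epsInf N : ℝ) * 169 ≤ (dArith N : ℝ) := by
      nlinarith [mul_le_mul_of_nonneg_left h3 (Nat.cast_nonneg (epsInf N))]
    nlinarith
  have hg0 : (0:ℝ) < ((genusX0 N : ℚ) : ℝ) := by linarith
  -- sum bound
  have hper : ∀ p ∈ N.primeFactors,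
      |((fCorr p (N.factorization p) (N / p ^ N.factorization p) : ℚ) : ℝ) * Real.log p
        / (12 * (dArith N : ℝ) * ((p : ℝ) - 1))|
      ≤ 84*(dArith N : ℝ)*(Real.log p/((p:ℝ)-1))
        + 84*(dArith N : ℝ)*((N.factorization p : ℝ)*Real.log p)/(N:ℝ)^((5:ℝ)/18) := by
    intro p hp
    have hp5 : (5:ℝ) ≤ (p:ℝ) := by exact_mod_cast five_le_of_mem hp hcop
    have hw : (0:ℝ) ≤ Real.log p := Real.log_nonneg (by
      have := (five_le_of_mem hp hcop)
      exact_mod_cast by omega)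
    have hc0 : (0:ℝ) < 12 * (dArith N : ℝ) * ((p : ℝ) - 1) := by nlinarith
    have habs : |((fCorr p (N.factorization p) (N / p ^ N.factorization p) : ℚ) : ℝ) * Real.log p
        / (12 * (dArith N : ℝ) * ((p : ℝ) - 1))|
        = |((fCorr p (N.factorization p) (N / p ^ N.factorization p) : ℚ) : ℝ)| * Real.log p
        / (12 * (dArith N : ℝ) * ((p : ℝ) - 1)) := by
      rw [abs_div, abs_mul, abs_of_nonneg hw, abs_of_pos hc0]
    rw [habs]
    exact summand_bound _ _ _ _ _ _ (abs_nonneg _) hA1 hw hD1 hp5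
      (by exact_mod_cast factorization_pos_of_mem hp)
      (per_prime hN1 hcop hp)
  have habs_sum : |∑ p ∈ N.primeFactors,
      ((fCorr p (N.factorization p) (N / p ^ N.factorization p) : ℚ) : ℝ) * Real.log p
        / (12 * (dArith N : ℝ) * ((p : ℝ) - 1))|
      ≤ 84*(dArith N : ℝ)*((T+2)^2 + Real.log N/T)
        + 84*(dArith N : ℝ)*(Real.log N/(N:ℝ)^((5:ℝ)/18)) := by
    calc |∑ p ∈ N.primeFactors,
        ((fCorr p (N.factorization p) (N / p ^ N.factorization p) : ℚ) : ℝ) * Real.log p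
          / (12 * (dArith N : ℝ) * ((p : ℝ) - 1))|
        ≤ ∑ p ∈ N.primeFactors,
          |((fCorr p (N.factorization p) (N / p ^ N.factorization p) : ℚ) : ℝ) * Real.log p
          / (12 * (dArith N : ℝ) * ((p : ℝ) - 1))| := Finset.abs_sum_le_sum_abs _ _
      _ ≤ ∑ p ∈ N.primeFactors, (84*(dArith N : ℝ)*(Real.log p/((p:ℝ)-1))
          + 84*(dArith N : ℝ)*((N.factorization p : ℝ)*Real.log p)/(N:ℝ)^((5:ℝ)/18)) :=
          Finset.sum_le_sum hper
      _ = 84*(dArith N : ℝ)*(∑ p ∈ N.primeFactors, Real.log p/((p:ℝ)-1))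
          + 84*(dArith N : ℝ)*(∑ p ∈ N.primeFactors,
            (N.factorization p : ℝ)*Real.log p)/(N:ℝ)^((5:ℝ)/18) := by
          rw [Finset.sum_add_distrib, ← Finset.mul_sum, ← Finset.sum_div, ← Finset.mul_sum]
      _ ≤ 84*(dArith N : ℝ)*((T+2)^2 + Real.log N/T)
          + 84*(dArith N : ℝ)*(Real.log N/(N:ℝ)^((5:ℝ)/18)) := by
          have s1 := sum_log_div_sub_one_le N hN0 T hT1
          have s2 : ∑ p ∈ N.primeFactors, (N.factorization p : ℝ)*Real.log p
              = Real.log N := (log_eq_sum N hN0).symm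
          rw [s2, mul_div_assoc]
          have := mul_le_mul_of_nonneg_left s1 (by linarith : (0:ℝ) ≤ 84*(dArith N : ℝ))
          linarith
  -- conclude
  rw [Real.norm_eq_abs, abs_div, abs_of_pos (mul_pos hg0 hL0)]
  have hgl : (dArith N : ℝ)/13 * Real.log N ≤ ((genusX0 N : ℚ) : ℝ) * Real.log N :=
    mul_le_mul_of_nonneg_right hg hL0.le
  have hgl0 : (0:ℝ) < (dArith N : ℝ)/13 * Real.log N := by positivity
  calc |∑ p ∈ N.primeFactors,
      ((fCorr p (N.factorization p) (N / p ^ N.factorization p) : ℚ) : ℝ) * Real.log p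
        / (12 * (dArith N : ℝ) * ((p : ℝ) - 1))| / (((genusX0 N : ℚ) : ℝ) * Real.log N)
      ≤ |∑ p ∈ N.primeFactors,
      ((fCorr p (N.factorization p) (N / p ^ N.factorization p) : ℚ) : ℝ) * Real.log p
        / (12 * (dArith N : ℝ) * ((p : ℝ) - 1))| / ((dArith N : ℝ)/13 * Real.log N) :=
        div_le_div_of_nonneg_left (abs_nonneg _) hgl0 hgl
    _ ≤ (84*(dArith N : ℝ)*((T+2)^2 + Real.log N/T)
          + 84*(dArith N : ℝ)*(Real.log N/(N:ℝ)^((5:ℝ)/18)))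
        / ((dArith N : ℝ)/13 * Real.log N) := by
        exact div_le_div_of_nonneg_right habs_sum hgl0.le
    _ = 1092*(T+2)^2/Real.log N + 1092/T + 1092/(N:ℝ)^((5:ℝ)/18) := by
        have hD0 : (dArith N : ℝ) ≠ 0 := by linarith
        have hL0' : Real.log N ≠ 0 := by linarith
        have hA0 : (N:ℝ)^((5:ℝ)/18) ≠ 0 := by linarith
        have hT0' : T ≠ 0 := by linarith
        field_simp
        ring
    _ < ε := by linarith
end

section
/- Let p > 3 be prime, let n ≥ 2 and 1 ≤ a ≤ n−1 be integers, and let M ≥ 1 satisfy gcd(M, 6p) = 1. Then d(M)·p^{|n−2a|}/6 + ε₂(M)/2 + ε₃(M)/3 + (1−(−1)ⁿ)·ξ(−3)·ε₃(M)/6 = 1 if and only if M = 1 and n = 2a. (Equivalently, the interior Igusa component C′_a of the special fibre of the Edixhoven model of X₀(pⁿM) has self-intersection −1 exactly when M = 1 and a = n/2.) -/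
open Finset Filter

lemma dArith_one : dArith 1 = 1 := by simp [dArith]
lemma eps2_one : eps2 1 = 1 := by simp [eps2]
lemma eps3_one : eps3 1 = 1 := by simp [eps3]

/-- Let `p > 3` be prime, `n ≥ 2`, `1 ≤ a ≤ n−1`, and `M ≥ 1` with `gcd(M, 6p) = 1`.  Then
`d(M)·p^{|n−2a|}/6 + ε₂(M)/2 + ε₃(M)/3 + (1−(−1)ⁿ)·ξ(−3)·ε₃(M)/6 = 1` if and only if
`M = 1` and `n = 2a`, where `ξ(−3) = 0` if `p ≡ 1 (mod 3)` and `ξ(−3) = 1` otherwise: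
the interior Igusa component `C′_a` of the special fibre of the Edixhoven model of
`X₀(pⁿM)` has self-intersection `−1` exactly when `M = 1` and `a = n/2`. -/
theorem stmt_11 (p n a M : ℕ) (hp : p.Prime) (hp3 : 3 < p) (hn : 2 ≤ n)
    (ha1 : 1 ≤ a) (ha2 : a ≤ n - 1) (hM : 1 ≤ M) (hcop : Nat.Coprime M (6 * p)) :
    (dArith M : ℚ) * (p : ℚ) ^ ((n : ℤ) - 2 * a).natAbs / 6 + (eps2 M : ℚ) / 2
        + (eps3 M : ℚ) / 3
        + (1 - (-1 : ℚ) ^ n) * (if p % 3 = 1 then (0 : ℚ) else 1) * (eps3 M : ℚ) / 6 = 1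
      ↔ M = 1 ∧ n = 2 * a := by
  set K : ℕ := ((n : ℤ) - 2 * a).natAbs with hK
  set ξ : ℚ := (if p % 3 = 1 then (0 : ℚ) else 1) with hξdef
  have hξ0 : 0 ≤ ξ := by rw [hξdef]; split_ifs <;> norm_num
  have hξ1 : ξ ≤ 1 := by rw [hξdef]; split_ifs <;> norm_num
  have hX0 : 0 ≤ 1 - (-1 : ℚ) ^ n := by
    rcases neg_one_pow_eq_or ℚ n with h | h <;> rw [h] <;> norm_num
  have hPQ1 : (1 : ℚ) ≤ (p : ℚ) ^ K := by
    apply one_le_pow₀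
    exact_mod_cast hp.one_le
  have hE2 : (0 : ℚ) ≤ (eps2 M : ℚ) := Nat.cast_nonneg _
  have hE3 : (0 : ℚ) ≤ (eps3 M : ℚ) := Nat.cast_nonneg _
  have hXE3 : (0 : ℚ) ≤ (1 - (-1 : ℚ) ^ n) * ξ * (eps3 M : ℚ) :=
    mul_nonneg (mul_nonneg hX0 hξ0) hE3
  have hq5 : ∀ q ∈ M.primeFactors, 5 ≤ q := by
    intro q hq
    have hqp : q.Prime := Nat.prime_of_mem_primeFactors hq
    have hqM : q ∣ M := Nat.dvd_of_mem_primeFactors hq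
    have h6 : Nat.Coprime q 6 :=
      Nat.Coprime.coprime_dvd_right ⟨p, rfl⟩ (hcop.coprime_dvd_left hqM)
    have hnd : ¬ q ∣ 6 := (Nat.Prime.coprime_iff_not_dvd hqp).mp h6
    have h2 : q ≠ 2 := by rintro rfl; exact hnd (by norm_num)
    have h3 : q ≠ 3 := by rintro rfl; exact hnd (by norm_num)
    have h4 : q ≠ 4 := by rintro rfl; exact (by norm_num : ¬ Nat.Prime 4) hqp
    have := hqp.two_le
    omega
  constructor
  · intro h
    by_cases hM1 : M = 1
    · subst hM1
      refine ⟨rfl, ?_⟩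
      rw [dArith_one, eps2_one, eps3_one] at h
      push_cast at h
      have hPle : (p : ℚ) ^ K ≤ 1 := by nlinarith [mul_nonneg hX0 hξ0]
      have hPeq : (p : ℚ) ^ K = 1 := le_antisymm hPle hPQ1
      have : p ^ K = 1 := by exact_mod_cast hPeq
      have hK0 : K = 0 := by
        by_contra hK0
        have := Nat.one_lt_pow hK0 (by omega : 1 < p)
        omega
      have : (n : ℤ) - 2 * a = 0 := Int.natAbs_eq_zero.mp hK0
      omega
    · exfalso
      have hcard1 : 1 ≤ M.primeFactors.card :=
        (Nat.nonempty_primeFactors.mpr (by omega)).card_pos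
      have hD6 : 6 ^ M.primeFactors.card ≤ dArith M := by
        rw [dArith, ← Finset.prod_const]
        apply Finset.prod_le_prod'
        intro q hq
        have h5 := hq5 q hq
        calc (6 : ℕ) ≤ q + 1 := by omega
        _ ≤ q ^ (M.factorization q - 1) * (q + 1) :=
            Nat.le_mul_of_pos_left _ (pow_pos (by omega) _)
      have hDge : 6 ≤ dArith M := by
        calc (6 : ℕ) = 6 ^ 1 := (pow_one 6).symm
        _ ≤ 6 ^ M.primeFactors.card := Nat.pow_le_pow_right (by norm_num) hcard1
        _ ≤ dArith M := hD6
      have hDQ : (6 : ℚ) ≤ (dArith M : ℚ) := by exact_mod_cast hDge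
      have hDP6 : (dArith M : ℚ) * (p : ℚ) ^ K ≤ 6 := by linarith
      have hDle6 : (dArith M : ℚ) ≤ 6 := by nlinarith
      have hDeq : (dArith M : ℚ) = 6 := le_antisymm hDle6 hDQ
      have hDeqN : dArith M = 6 := by exact_mod_cast hDeq
      have hDPeq : (dArith M : ℚ) * (p : ℚ) ^ K = 6 := by nlinarith
      have hE2zero : (eps2 M : ℚ) = 0 := by linarith [le_antisymm (by linarith) hE2]
      have hE2N : eps2 M = 0 := by exact_mod_cast hE2zero
      -- card = 1
      have hcardle : M.primeFactors.card ≤ 1 := by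
        by_contra hc
        push_neg at hc
        have : 6 ^ 2 ≤ 6 ^ M.primeFactors.card := Nat.pow_le_pow_right (by norm_num) hc
        omega
      have hcard : M.primeFactors.card = 1 := le_antisymm hcardle hcard1
      obtain ⟨q, hq⟩ := Finset.card_eq_one.mp hcard
      have hqmem : q ∈ M.primeFactors := by rw [hq]; exact Finset.mem_singleton_self q
      have h5 := hq5 q hqmem
      have hd : q ^ (M.factorization q - 1) * (q + 1) = 6 := by
        rw [dArith, hq, Finset.prod_singleton] at hDeqN
        exact hDeqN
      have hqle : q + 1 ≤ 6 := by
        calc q + 1 ≤ q ^ (M.factorization q - 1) * (q + 1) :=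
              Nat.le_mul_of_pos_left _ (pow_pos (by omega) _)
        _ = 6 := hd
      have hq5eq : q = 5 := by omega
      subst hq5eq
      rw [eps2, hq, Finset.prod_singleton] at hE2N
      norm_num at hE2N
  · rintro ⟨rfl, rfl⟩
    have hK0 : K = 0 := by
      rw [hK]
      have h0 : ((2 * a : ℕ) : ℤ) - 2 * (a : ℤ) = 0 := by push_cast; ring
      rw [h0]
      rfl
    rw [dArith_one, eps2_one, eps3_one, hK0]
    have : (-1 : ℚ) ^ (2 * a) = 1 := by
      rw [pow_mul]; norm_num
    rw [this]
    norm_num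
end

section
/- Let p > 3 be prime, let n ≥ 1 be an integer, and let M ≥ 1 satisfy gcd(M, 6p) = 1. Then d(M)·p^{n−1}(p−1)/12 + ξ(−1)·ε₂(M)/2 + (3−(−1)ⁿ)·ξ(−3)·ε₃(M)/6 = 1 if and only if M = 1, n = 1 and p ∈ {5, 7, 13}. (Equivalently, the Igusa components C′₀ and C′_n of the special fibre of the Edixhoven model of X₀(pⁿM) have self-intersection −1 exactly when N = pⁿM ∈ {5, 7, 13}.) -/
open Finset Filter

/-- Let `p > 3` be prime, `n ≥ 1`, and `M ≥ 1` with `gcd(M, 6p) = 1`.  Then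
`d(M)·p^{n−1}(p−1)/12 + ξ(−1)·ε₂(M)/2 + (3−(−1)ⁿ)·ξ(−3)·ε₃(M)/6 = 1` if and only if
`M = 1`, `n = 1` and `p ∈ {5, 7, 13}`, where `ξ(−1) = 0` if `p ≡ 1 (mod 4)` and `1`
otherwise, and `ξ(−3) = 0` if `p ≡ 1 (mod 3)` and `1` otherwise: the Igusa components
`C′₀` and `C′_n` of the special fibre of the Edixhoven model of `X₀(pⁿM)` have
self-intersection `−1` exactly when `N = pⁿM ∈ {5, 7, 13}`. -/
theorem stmt_12 (p n M : ℕ) (hp : p.Prime) (hp3 : 3 < p) (hn : 1 ≤ n)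
    (hM : 1 ≤ M) (hcop : Nat.Coprime M (6 * p)) :
    (dArith M : ℚ) * (p : ℚ) ^ (n - 1) * ((p : ℚ) - 1) / 12
        + (if p % 4 = 1 then (0 : ℚ) else 1) * (eps2 M : ℚ) / 2
        + (3 - (-1 : ℚ) ^ n) * (if p % 3 = 1 then (0 : ℚ) else 1) * (eps3 M : ℚ) / 6 = 1
      ↔ M = 1 ∧ n = 1 ∧ p ∈ ({5, 7, 13} : Set ℕ) := by
  have hp5 : 5 ≤ p := by
    have h4 : p ≠ 4 := by rintro rfl; norm_num at hp
    omega
  have hpQ : (5 : ℚ) ≤ (p : ℚ) := by exact_mod_cast hp5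
  constructor
  · intro h
    -- nonnegativity of the second and third terms
    have he2 : (0 : ℚ) ≤ (eps2 M : ℚ) := by positivity
    have he3 : (0 : ℚ) ≤ (eps3 M : ℚ) := by positivity
    have hc2 : (0 : ℚ) ≤ (if p % 4 = 1 then (0 : ℚ) else 1) := by split <;> norm_num
    have hc3 : (0 : ℚ) ≤ (if p % 3 = 1 then (0 : ℚ) else 1) := by split <;> norm_num
    have hsgn : (-1 : ℚ) ^ n = 1 ∨ (-1 : ℚ) ^ n = -1 := by
      rcases Nat.even_or_odd n with h' | h'
      · left; exact h'.neg_one_pow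
      · right; exact h'.neg_one_pow
    have h3n : (2 : ℚ) ≤ 3 - (-1 : ℚ) ^ n := by rcases hsgn with h' | h' <;> rw [h'] <;> norm_num
    have ht2 : (0 : ℚ) ≤ (if p % 4 = 1 then (0 : ℚ) else 1) * (eps2 M : ℚ) / 2 := by
      apply div_nonneg (mul_nonneg hc2 he2); norm_num
    have ht3 : (0 : ℚ) ≤ (3 - (-1 : ℚ) ^ n) * (if p % 3 = 1 then (0 : ℚ) else 1) * (eps3 M : ℚ) / 6 := by
      apply div_nonneg (mul_nonneg (mul_nonneg (by linarith) hc3) he3); norm_num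
    have ht1 : (dArith M : ℚ) * (p : ℚ) ^ (n - 1) * ((p : ℚ) - 1) / 12 ≤ 1 := by linarith
    have hpow1 : (1 : ℚ) ≤ (p : ℚ) ^ (n - 1) := one_le_pow₀ (by linarith)
    -- M = 1
    have hM1 : M = 1 := by
      by_contra hne
      obtain ⟨q, hq, hqd⟩ := Nat.exists_prime_and_dvd hne
      have hq6 : ¬ q ∣ 6 * p → True := fun _ => trivial
      have hqne : ∀ k : ℕ, k ∣ 6 → q ≠ k ∨ k = 1 := by
        intro k hk
        by_cases hk1 : k = 1
        · right; exact hk1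
        · left; rintro rfl
          have : q ∣ 6 * p := hk.trans (Dvd.intro p rfl)
          have : q ∣ 1 := hcop ▸ Nat.dvd_gcd hqd this
          exact hq.one_lt.ne' (Nat.dvd_one.mp this)
      have hq2 : q ≠ 2 := by
        rcases hqne 2 (by norm_num) with h' | h'
        · exact h'
        · norm_num at h'
      have hq3 : q ≠ 3 := by
        rcases hqne 3 (by norm_num) with h' | h'
        · exact h'
        · norm_num at h'
      have hq4 : q ≠ 4 := by rintro rfl; norm_num at hq
      have hq5 : 5 ≤ q := by have := hq.two_le; omega
      have hmem : q ∈ M.primeFactors := Nat.mem_primeFactors.mpr ⟨hq, hqd, by omega⟩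
      have h1 : ∀ r ∈ M.primeFactors, 1 ≤ r ^ (M.factorization r - 1) * (r + 1) := by
        intro r hr
        have hr2 := (Nat.prime_of_mem_primeFactors hr).two_le
        exact Nat.one_le_iff_ne_zero.mpr (Nat.mul_ne_zero (pow_ne_zero _ (by omega)) (by omega))
      have key : q ^ (M.factorization q - 1) * (q + 1) ≤ dArith M :=
        Finset.single_le_prod' h1 hmem
      have hpp : 0 < q ^ (M.factorization q - 1) := pow_pos (by omega) _
      have h6 : 6 ≤ dArith M := by
        calc 6 ≤ q + 1 := by omega
        _ ≤ q ^ (M.factorization q - 1) * (q + 1) := Nat.le_mul_of_pos_left _ hpp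
        _ ≤ dArith M := key
      have h6Q : (6 : ℚ) ≤ (dArith M : ℚ) := by exact_mod_cast h6
      nlinarith [mul_le_mul_of_nonneg_left hpow1 (by linarith : (0:ℚ) ≤ (dArith M : ℚ))]
    subst hM1
    have d1 : dArith 1 = 1 := by simp [dArith]
    have e21 : eps2 1 = 1 := by simp [eps2]
    have e31 : eps3 1 = 1 := by simp [eps3]
    simp only [d1, e21, e31] at h ht1
    push_cast at h ht1
    -- n = 1
    have hn1 : n = 1 := by
      by_contra hne
      have hn2 : 2 ≤ n := by omega
      have : (p : ℚ) ≤ (p : ℚ) ^ (n - 1) := le_self_pow₀ (by linarith) (by omega)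
      nlinarith
    subst hn1
    refine ⟨rfl, rfl, ?_⟩
    simp only [pow_one, pow_zero, one_mul, mul_one] at h
    by_cases h4 : p % 4 = 1 <;> by_cases h3 : p % 3 = 1 <;>
      simp only [h4, h3, if_true, if_false, if_pos, if_neg, zero_mul, mul_zero, zero_div,
        add_zero, mul_one, one_mul] at h <;>
      simp only [Set.mem_insert_iff, Set.mem_singleton_iff]
    · -- p = 13
      right; right
      have : (p : ℚ) = 13 := by linarith
      exact_mod_cast this
    · -- p = 5
      left
      have : (p : ℚ) = 5 := by linarith
      exact_mod_cast this
    · -- p = 7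
      right; left
      have : (p : ℚ) = 7 := by linarith
      exact_mod_cast this
    · exfalso; linarith
  · rintro ⟨rfl, rfl, hp513⟩
    have d1 : dArith 1 = 1 := by simp [dArith]
    have e21 : eps2 1 = 1 := by simp [eps2]
    have e31 : eps3 1 = 1 := by simp [eps3]
    rw [d1, e21, e31]
    simp only [Set.mem_insert_iff, Set.mem_singleton_iff] at hp513
    rcases hp513 with rfl | rfl | rfl <;> norm_num
end
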